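/- arXiv:0805.3912 — 5 statements merged into one kernel-verified Lean document; each statement's English description precedes it below -/
import Mathlib

section
/- For nonempty closed bounded convex subsets A, B of a Banach space E, the Hausdorff distance between A and B equals the supremum over x* in the closed unit ball of the dual space of |s(x*, A) − s(x*, B)|, where s(x*, C) = sup_{c ∈ C} x*(c) is the support function. -/
open Pointwise Metric

private lemma sup_image_le_aux {E : Type*} [NormedAddCommGroup E] [NormedSpace ℝ E]
    {A B : Set E} (hAne : A.Nonempty) (hBne : B.Nonempty)
    (hAb : Bornology.IsBounded A) (hBb : Bornology.IsBounded B)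
    (f : StrongDual ℝ E) (hf : ‖f‖ ≤ 1) :
    sSup (f '' A) ≤ sSup (f '' B) + hausdorffDist A B := by
  have hne : EMetric.hausdorffEdist A B ≠ ⊤ :=
    Metric.hausdorffEdist_ne_top_of_nonempty_of_bounded hAne hBne hAb hBb
  have hbddB : BddAbove (f '' B) := (f.lipschitz.isBounded_image hBb).bddAbove
  refine csSup_le (hAne.image f) ?_
  rintro _ ⟨a, ha, rfl⟩
  refine le_of_forall_pos_le_add fun ε hε => ?_
  have h1 : infDist a B < hausdorffDist A B + ε :=
    lt_of_le_of_lt (Metric.infDist_le_hausdorffDist_of_mem ha hne) (by linarith)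
  obtain ⟨b, hb, hab⟩ := (Metric.infDist_lt_iff hBne).mp h1
  have : f a - f b ≤ dist a b := by
    calc f a - f b = f (a - b) := by simp
    _ ≤ ‖f (a - b)‖ := le_abs_self _
    _ ≤ ‖f‖ * ‖a - b‖ := f.le_opNorm _
    _ ≤ 1 * ‖a - b‖ := by
        apply mul_le_mul_of_nonneg_right hf (norm_nonneg _)
    _ = dist a b := by rw [one_mul, dist_eq_norm]
  have hfb : f b ≤ sSup (f '' B) := le_csSup hbddB ⟨b, hb, rfl⟩
  linarith

/-- Key separation step: `infDist x B ≤ S` for `x ∈ A`. -/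
private lemma infDist_le_aux {E : Type*} [NormedAddCommGroup E] [NormedSpace ℝ E]
    {A B : Set E} (hAne : A.Nonempty) (hBne : B.Nonempty)
    (hAb : Bornology.IsBounded A) (hBb : Bornology.IsBounded B) (hBco : Convex ℝ B)
    {x : E} (hx : x ∈ A)
    {S : ℝ} (hS0 : 0 ≤ S)
    (hS : ∀ g : StrongDual ℝ E, ‖g‖ ≤ 1 → |sSup (g '' A) - sSup (g '' B)| ≤ S) :
    infDist x B ≤ S := by
  by_contra h
  push_neg at h
  obtain ⟨r, hrS, hrd⟩ := exists_between h
  obtain ⟨r', hr'S, hr'r⟩ := exists_between hrS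
  have hr0 : 0 < r := lt_of_le_of_lt hS0 hrS
  have hr'0 : 0 < r' := lt_of_le_of_lt hS0 hr'S
  have hdisj : Disjoint (Metric.ball x r) B := by
    rw [Set.disjoint_left]
    intro y hy hyB
    exact absurd (Metric.infDist_le_dist_of_mem hyB) (by
      rw [mem_ball, dist_comm] at hy; linarith)
  obtain ⟨f, s, hfs, hsf⟩ := geometric_hahn_banach_open (convex_ball x r) isOpen_ball hBco hdisj
  -- f is nonzero
  obtain ⟨b, hb⟩ := hBne
  have hfx : f x < s := hfs x (mem_ball_self hr0)
  have hf0 : f ≠ 0 := by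
    intro hf
    have := hsf b hb
    rw [hf] at hfx this
    simp at hfx this
    linarith
  have hfn : 0 < ‖f‖ := norm_pos_iff.mpr hf0
  have hsfx : 0 < s - f x := by linarith
  -- bound the norm: r' * ‖f‖ ≤ s - f x
  have hball : ∀ u : E, ‖u‖ ≤ r' → ‖f u‖ ≤ s - f x := by
    intro u hu
    have hu' : ‖u‖ < r := lt_of_le_of_lt hu hr'r
    have h1 : f (x + u) < s := hfs _ (by rw [mem_ball, dist_self_add_left]; exact hu')
    have h2 : f (x + -u) < s := hfs _ (by rw [mem_ball, dist_self_add_left, norm_neg]; exact hu')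
    rw [map_add] at h1 h2
    rw [map_neg] at h2
    rw [Real.norm_eq_abs, abs_le]
    constructor <;> linarith
  have hnorm : ‖f‖ ≤ (s - f x) / r' := by
    refine f.opNorm_le_bound (by positivity) fun u => ?_
    rcases eq_or_ne u 0 with rfl | hu0
    · simp
    have hun : 0 < ‖u‖ := norm_pos_iff.mpr hu0
    have hv : ‖f ((r' * ‖u‖⁻¹) • u)‖ ≤ s - f x := by
      refine hball _ ?_
      rw [norm_smul, Real.norm_eq_abs, abs_of_pos (by positivity)]
      field_simp
      exact le_rfl
    rw [map_smul, norm_smul, Real.norm_eq_abs, abs_of_pos (by positivity)] at hv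
    rw [div_mul_eq_mul_div, le_div_iff₀ hr'0]
    calc ‖f u‖ * r' = r' * ‖f u‖ := mul_comm _ _
      _ = ‖u‖ * (r' * ‖u‖⁻¹ * ‖f u‖) := by field_simp
      _ ≤ ‖u‖ * (s - f x) := mul_le_mul_of_nonneg_left hv hun.le
      _ = (s - f x) * ‖u‖ := mul_comm _ _
  have hkey : r' * ‖f‖ ≤ s - f x := by
    rw [le_div_iff₀ hr'0] at hnorm
    linarith [hnorm]
  -- the normalized functional
  set g : StrongDual ℝ E := -(‖f‖⁻¹ • f) with hg
  have hgnorm : ‖g‖ ≤ 1 := by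
    rw [hg, norm_neg, norm_smul, norm_inv, norm_norm, inv_mul_cancel₀ hfn.ne']
  have hgval : ∀ y, g y = -(‖f‖⁻¹ * f y) := fun y => by simp [hg]
  -- for every b ∈ B, g b ≤ g x - r
  have hgb : ∀ y ∈ B, g y ≤ g x - r' := by
    intro y hy
    rw [hgval, hgval]
    have h1 : s ≤ f y := hsf y hy
    have h2 : f x + r' * ‖f‖ ≤ f y := by linarith
    have : r' ≤ ‖f‖⁻¹ * (f y - f x) := by
      rw [le_inv_mul_iff₀ hfn]
      linarith [h2]
    nlinarith [this]
  have hsupB : sSup (g '' B) ≤ g x - r' := csSup_le (Set.Nonempty.image _ ⟨b, hb⟩) (by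
    rintro _ ⟨y, hy, rfl⟩; exact hgb y hy)
  have hsupA : g x ≤ sSup (g '' A) := le_csSup (g.lipschitz.isBounded_image hAb).bddAbove ⟨x, hx, rfl⟩
  have : r' ≤ |sSup (g '' A) - sSup (g '' B)| :=
    le_trans (by linarith) (le_abs_self _)
  linarith [hS g hgnorm]

/-- For nonempty closed bounded convex sets, the Hausdorff distance equals the supremum
over the dual unit ball of the absolute difference of support functions. -/
theorem hausdorffDist_eq_sup_support_function
    {E : Type*} [NormedAddCommGroup E] [NormedSpace ℝ E] [CompleteSpace E]
    (A B : Set E)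
    (hAne : A.Nonempty) (hAcl : IsClosed A) (hAb : Bornology.IsBounded A) (hAco : Convex ℝ A)
    (hBne : B.Nonempty) (hBcl : IsClosed B) (hBb : Bornology.IsBounded B) (hBco : Convex ℝ B) :
    Metric.hausdorffDist A B =
      sSup ((fun f : StrongDual ℝ E => |sSup (f '' A) - sSup (f '' B)|) ''
        Metric.closedBall (0 : StrongDual ℝ E) 1) := by
  set T := ((fun f : StrongDual ℝ E => |sSup (f '' A) - sSup (f '' B)|) ''
        Metric.closedBall (0 : StrongDual ℝ E) 1) with hT
  have hmem : ∀ f : StrongDual ℝ E, ‖f‖ ≤ 1 →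
      |sSup (f '' A) - sSup (f '' B)| ∈ T := by
    intro f hf
    exact ⟨f, by rwa [mem_closedBall, dist_zero_right], rfl⟩
  have hub : ∀ y ∈ T, y ≤ Metric.hausdorffDist A B := by
    rintro _ ⟨f, hf, rfl⟩
    rw [mem_closedBall, dist_zero_right] at hf
    rw [abs_sub_le_iff]
    constructor
    · linarith [sup_image_le_aux hAne hBne hAb hBb f hf]
    · have hc : Metric.hausdorffDist B A = Metric.hausdorffDist A B :=
        Metric.hausdorffDist_comm
      linarith [sup_image_le_aux hBne hAne hBb hAb f hf]
  have hbdd : BddAbove T := ⟨Metric.hausdorffDist A B, hub⟩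
  have hS0 : 0 ≤ sSup T := by
    have h0 : |sSup ((0 : StrongDual ℝ E) '' A) - sSup ((0 : StrongDual ℝ E) '' B)| ∈ T :=
      hmem 0 (by simp)
    exact le_trans (abs_nonneg _) (le_csSup hbdd h0)
  have hSle : ∀ g : StrongDual ℝ E, ‖g‖ ≤ 1 →
      |sSup (g '' A) - sSup (g '' B)| ≤ sSup T := fun g hg => le_csSup hbdd (hmem g hg)
  refine le_antisymm ?_ (csSup_le ⟨_, hmem 0 (by simp)⟩ hub)
  refine Metric.hausdorffDist_le_of_infDist hS0 ?_ ?_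
  · intro x hx
    exact infDist_le_aux hAne hBne hAb hBb hBco hx hS0 hSle
  · intro x hx
    refine le_trans (infDist_le_aux hBne hAne hBb hAb hAco hx hS0 ?_) le_rfl
    intro g hg
    rw [abs_sub_comm]
    exact hSle g hg
end

section
/- Support function commutes with the Aumann integral: let G : [a,b] → (nonempty closed convex bounded subsets of a separable reflexive Banach space E) be measurable and integrably bounded. Then for every x* in the dual of E, s(x*, ∫_a^b G(τ) dτ) = ∫_a^b s(x*, G(τ)) dτ. -/
open MeasureTheory Metric TopologicalSpace Filter
open scoped Classical

section KRN

variable {E : Type*} [NormedAddCommGroup E]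

/-- Auxiliary recursion for the Kuratowski–Ryll-Nardzewski selection theorem. -/
private noncomputable def krnAux (F : ℝ → Set E) (e : ℕ → E)
    (hex : ∀ S : Set E, S.Nonempty → ∀ r : ℝ, 0 < r → ∃ k, (S ∩ ball (e k) r).Nonempty)
    (hne : ∀ τ, (F τ).Nonempty) (τ : ℝ) (n : ℕ) :
    {k : ℕ // (F τ ∩ ball (e k) ((1/2 : ℝ)^n)).Nonempty} :=
  Nat.rec (motive := fun n => {k : ℕ // (F τ ∩ ball (e k) ((1/2 : ℝ)^n)).Nonempty})
    ⟨Nat.find (hex (F τ) (hne τ) ((1/2:ℝ)^0) (by norm_num)),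
      Nat.find_spec (hex (F τ) (hne τ) ((1/2:ℝ)^0) (by norm_num))⟩
    (fun n p =>
      ⟨Nat.find (hex (F τ ∩ ball (e p.1) ((1/2:ℝ)^n)) p.2 ((1/2:ℝ)^(n+1)) (by positivity)),
        Set.Nonempty.mono (fun z hz => ⟨hz.1.1, hz.2⟩)
          (Nat.find_spec (hex (F τ ∩ ball (e p.1) ((1/2:ℝ)^n)) p.2 ((1/2:ℝ)^(n+1)) (by positivity)))⟩)
    n

theorem krn_selection [MeasurableSpace E] [BorelSpace E] [CompleteSpace E] [SeparableSpace E]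
    (F : ℝ → Set E) (hne : ∀ τ, (F τ).Nonempty)
    (hmeas : ∀ O : Set E, IsOpen O → MeasurableSet {τ | (F τ ∩ O).Nonempty}) :
    ∃ f : ℝ → E, Measurable f ∧ ∀ τ, f τ ∈ closure (F τ) := by
  have hEne : Nonempty E := ⟨0⟩
  set e : ℕ → E := denseSeq E with he
  have hdense : DenseRange e := denseRange_denseSeq E
  have hex : ∀ S : Set E, S.Nonempty → ∀ r : ℝ, 0 < r → ∃ k, (S ∩ ball (e k) r).Nonempty := by
    rintro S ⟨y, hy⟩ r hr
    obtain ⟨k, hk⟩ := hdense.exists_dist_lt y hr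
    exact ⟨k, y, hy, by simpa [mem_ball, dist_comm] using hk⟩
  set g : ℕ → ℝ → ℕ := fun n τ => (krnAux F e hex hne τ n).1 with hg
  -- basic spec
  have hmem : ∀ n τ, (F τ ∩ ball (e (g n τ)) ((1/2:ℝ)^n)).Nonempty :=
    fun n τ => (krnAux F e hex hne τ n).2
  have hstep : ∀ n τ,
      ((F τ ∩ ball (e (g n τ)) ((1/2:ℝ)^n)) ∩ ball (e (g (n+1) τ)) ((1/2:ℝ)^(n+1))).Nonempty := by
    intro n τ
    exact Nat.find_spec (hex (F τ ∩ ball (e (g n τ)) ((1/2:ℝ)^n)) (hmem n τ) ((1/2:ℝ)^(n+1))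
      (by positivity))
  -- characterization for measurability
  have hg0 : ∀ m : ℕ, ∀ τ, (g 0 τ = m ↔
      (F τ ∩ ball (e m) ((1/2:ℝ)^0)).Nonempty ∧
        ∀ j < m, ¬ (F τ ∩ ball (e j) ((1/2:ℝ)^0)).Nonempty) := by
    intro m τ
    rw [show g 0 τ = Nat.find (hex (F τ) (hne τ) ((1/2:ℝ)^0) (by norm_num)) from rfl,
      Nat.find_eq_iff]
  have hgs : ∀ n : ℕ, ∀ m : ℕ, ∀ j : ℕ, ∀ τ, g n τ = j →
      (g (n+1) τ = m ↔
        ((F τ ∩ ball (e j) ((1/2:ℝ)^n)) ∩ ball (e m) ((1/2:ℝ)^(n+1))).Nonempty ∧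
        ∀ i < m, ¬ ((F τ ∩ ball (e j) ((1/2:ℝ)^n)) ∩ ball (e i) ((1/2:ℝ)^(n+1))).Nonempty) := by
    intro n m j τ hj
    have h : g (n+1) τ = Nat.find (hex (F τ ∩ ball (e (g n τ)) ((1/2:ℝ)^n)) (hmem n τ)
        ((1/2:ℝ)^(n+1)) (by positivity)) := rfl
    rw [h, Nat.find_eq_iff]
    subst hj
    rfl
  -- measurability of g n
  have hball : ∀ (O : Set E), IsOpen O → ∀ c r, MeasurableSet {τ | ((F τ ∩ O) ∩ ball c r).Nonempty} := by
    intro O hO c r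
    have : {τ | ((F τ ∩ O) ∩ ball c r).Nonempty} = {τ | (F τ ∩ (O ∩ ball c r)).Nonempty} := by
      ext τ; simp [Set.inter_assoc]
    rw [this]
    exact hmeas _ (hO.inter isOpen_ball)
  have hball' : ∀ c (r : ℝ), MeasurableSet {τ | (F τ ∩ ball c r).Nonempty} :=
    fun c r => hmeas _ isOpen_ball
  have hgmeas : ∀ n, Measurable (g n) := by
    intro n
    induction n with
    | zero =>
      apply measurable_to_countable'
      intro m
      have : g 0 ⁻¹' {m} = {τ | (F τ ∩ ball (e m) ((1/2:ℝ)^0)).Nonempty} ∩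
          ⋂ j ∈ Set.Iio m, {τ | ¬ (F τ ∩ ball (e j) ((1/2:ℝ)^0)).Nonempty} := by
        ext τ
        simp only [Set.mem_preimage, Set.mem_singleton_iff, Set.mem_inter_iff, Set.mem_setOf_eq,
          Set.mem_iInter, Set.mem_Iio, hg0 m τ]
      rw [this]
      exact (hball' _ _).inter (MeasurableSet.biInter (Set.to_countable _)
        (fun j _ => (hball' _ _).compl))
    | succ n ih =>
      apply measurable_to_countable'
      intro m
      have hdecomp : g (n+1) ⁻¹' {m} = ⋃ j : ℕ, ({τ | g n τ = j} ∩
          ({τ | ((F τ ∩ ball (e j) ((1/2:ℝ)^n)) ∩ ball (e m) ((1/2:ℝ)^(n+1))).Nonempty} ∩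
           ⋂ i ∈ Set.Iio m, {τ | ¬ ((F τ ∩ ball (e j) ((1/2:ℝ)^n)) ∩ ball (e i) ((1/2:ℝ)^(n+1))).Nonempty})) := by
        ext τ
        simp only [Set.mem_preimage, Set.mem_singleton_iff, Set.mem_iUnion, Set.mem_inter_iff,
          Set.mem_setOf_eq, Set.mem_iInter, Set.mem_Iio]
        constructor
        · intro h
          refine ⟨g n τ, rfl, ?_⟩
          have := (hgs n m (g n τ) τ rfl).mp h
          exact ⟨this.1, fun i hi => this.2 i hi⟩
        · rintro ⟨j, hj, h1, h2⟩
          exact (hgs n m j τ hj).mpr ⟨h1, fun i hi => h2 i hi⟩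
      rw [hdecomp]
      refine MeasurableSet.iUnion (fun j => ?_)
      refine (ih (MeasurableSet.singleton j)).inter ?_
      refine (hball _ isOpen_ball _ _).inter ?_
      exact MeasurableSet.biInter (Set.to_countable _)
        (fun i _ => (hball _ isOpen_ball _ _).compl)
  -- the approximating sequence
  set fs : ℕ → ℝ → E := fun n τ => e (g n τ) with hfs
  have hfsmeas : ∀ n, Measurable (fs n) := fun n => measurable_from_top.comp (hgmeas n)
  have hdist : ∀ n τ, dist (fs n τ) (fs (n+1) τ) ≤ 2 * (1/2:ℝ)^n := by
    intro n τ
    obtain ⟨z, ⟨⟨_, hz1⟩, hz2⟩⟩ := hstep n τ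
    have h1 : dist (fs n τ) z < (1/2:ℝ)^n := by rw [dist_comm]; exact hz1
    have h2 : dist z (fs (n+1) τ) < (1/2:ℝ)^(n+1) := mem_ball.mp hz2
    have hp : (0:ℝ) < (1/2:ℝ)^n := by positivity
    calc dist (fs n τ) (fs (n+1) τ) ≤ dist (fs n τ) z + dist z (fs (n+1) τ) := dist_triangle _ _ _
    _ ≤ (1/2:ℝ)^n + (1/2:ℝ)^(n+1) := by linarith
    _ ≤ 2 * (1/2:ℝ)^n := by rw [pow_succ]; nlinarith
  have hcauchy : ∀ τ, CauchySeq (fun n => fs n τ) :=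
    fun τ => cauchySeq_of_le_geometric (1/2) 2 (by norm_num) (fun n => hdist n τ)
  set f : ℝ → E := fun τ => limUnder atTop (fun n => fs n τ) with hf
  have htends : ∀ τ, Tendsto (fun n => fs n τ) atTop (nhds (f τ)) :=
    fun τ => (hcauchy τ).tendsto_limUnder
  refine ⟨f, ?_, ?_⟩
  · exact measurable_of_tendsto_metrizable hfsmeas (tendsto_pi_nhds.mpr htends)
  · intro τ
    rw [Metric.mem_closure_iff]
    intro ε hε
    obtain ⟨N1, hN1⟩ := Metric.tendsto_atTop.mp (htends τ) (ε/2) (by linarith)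
    obtain ⟨N2, hN2⟩ := exists_pow_lt_of_lt_one (show (0:ℝ) < ε/2 by linarith)
      (show (1/2:ℝ) < 1 by norm_num)
    set n := max N1 N2
    obtain ⟨z, hzF, hz⟩ := hmem n τ
    refine ⟨z, hzF, ?_⟩
    have h1 : dist (fs n τ) (f τ) < ε/2 := hN1 n (le_max_left _ _)
    have h2 : dist z (fs n τ) < (1/2:ℝ)^n := mem_ball.mp hz
    have h3 : ((1:ℝ)/2)^n ≤ (1/2:ℝ)^N2 :=
      pow_le_pow_of_le_one (by norm_num) (by norm_num) (le_max_right _ _)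
    calc dist (f τ) z ≤ dist (f τ) (fs n τ) + dist (fs n τ) z := dist_triangle _ _ _
    _ < ε/2 + (1/2:ℝ)^n := by
      have h1' : dist (f τ) (fs n τ) < ε/2 := by rw [dist_comm]; exact h1
      have h2' : dist (fs n τ) z < (1/2:ℝ)^n := by rw [dist_comm]; exact h2
      linarith
    _ ≤ ε/2 + (1/2:ℝ)^N2 := by linarith
    _ < ε := by linarith
end KRN



open MeasureTheory Pointwise

/-- The Aumann integral of a set-valued map `X` over a set `s ⊆ ℝ` (w.r.t. Lebesgue measure). -/
noncomputable def aumannIntegral {E : Type*} [NormedAddCommGroup E] [NormedSpace ℝ E]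
    (X : ℝ → Set E) (s : Set ℝ) : Set E :=
  {y | ∃ f : ℝ → E, IntegrableOn f s volume ∧
        (∀ᵐ τ ∂(volume.restrict s), f τ ∈ X τ) ∧ y = ∫ τ in s, f τ}

/-- The support function commutes with the Aumann integral: for a measurable integrably bounded
set-valued map `G` with nonempty closed bounded convex values in a separable reflexive Banach
space, `s(x*, ∫_a^b G dτ) = ∫_a^b s(x*, G(τ)) dτ` for every `x*` in the dual. -/
theorem supportFunction_aumannIntegral
    {E : Type*} [NormedAddCommGroup E] [NormedSpace ℝ E] [CompleteSpace E]
    [TopologicalSpace.SeparableSpace E]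
    (hrefl : Function.Surjective (NormedSpace.inclusionInDoubleDual ℝ E))
    (a b : ℝ) (hab : a ≤ b) (G : ℝ → Set E)
    (hne : ∀ τ ∈ Set.Icc a b, (G τ).Nonempty)
    (hcl : ∀ τ ∈ Set.Icc a b, IsClosed (G τ))
    (hco : ∀ τ ∈ Set.Icc a b, Convex ℝ (G τ))
    (hbdd : ∀ τ ∈ Set.Icc a b, Bornology.IsBounded (G τ))
    (hmeas : ∀ O : Set E, IsOpen O → MeasurableSet {τ | τ ∈ Set.Icc a b ∧ (G τ ∩ O).Nonempty})
    (hbd : ∃ k : ℝ → ℝ, IntegrableOn k (Set.Icc a b) volume ∧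
        ∀ᵐ τ ∂(volume.restrict (Set.Icc a b)), ∀ x ∈ G τ, ‖x‖ ≤ k τ)
    (x : StrongDual ℝ E) :
    sSup ((fun y => x y) '' aumannIntegral G (Set.Ioc a b)) =
      ∫ τ in Set.Ioc a b, sSup ((fun y => x y) '' G τ) := by
  classical
  borelize E
  obtain ⟨k, hk_int, hk_bd⟩ := hbd
  set I := Set.Icc a b with hI
  set J := Set.Ioc a b with hJ
  have hJI : J ⊆ I := Set.Ioc_subset_Icc_self
  set sf : ℝ → ℝ := fun τ => sSup ((fun y => x y) '' G τ) with hsf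
  -- basic facts about the support function on I
  have himg_ne : ∀ τ ∈ I, ((fun y => x y) '' G τ).Nonempty := fun τ hτ => (hne τ hτ).image _
  have hbddA : ∀ τ ∈ I, BddAbove ((fun y => x y) '' G τ) := by
    intro τ hτ
    obtain ⟨C, hC⟩ := isBounded_iff_forall_norm_le.mp (hbdd τ hτ)
    refine ⟨‖x‖ * C, ?_⟩
    rintro _ ⟨y, hy, rfl⟩
    calc x y ≤ ‖x y‖ := le_abs_self _
    _ ≤ ‖x‖ * ‖y‖ := x.le_opNorm y
    _ ≤ ‖x‖ * C := mul_le_mul_of_nonneg_left (hC y hy) (norm_nonneg x)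
  have hsup_lt : ∀ τ ∈ I, ∀ c : ℝ, (c < sf τ ↔ (G τ ∩ (fun y => x y) ⁻¹' (Set.Ioi c)).Nonempty) := by
    intro τ hτ c
    constructor
    · intro h
      obtain ⟨_, ⟨y, hy, rfl⟩, hgt⟩ := exists_lt_of_lt_csSup (himg_ne τ hτ) h
      exact ⟨y, hy, hgt⟩
    · rintro ⟨y, hy, hgt⟩
      exact lt_of_lt_of_le hgt (le_csSup (hbddA τ hτ) (Set.mem_image_of_mem _ hy))
  -- measurability of auxiliary sets
  have hmeas' : ∀ O : Set E, IsOpen O → ∀ c : ℝ,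
      MeasurableSet {τ | τ ∈ I ∧ (G τ ∩ (O ∩ (fun y => x y) ⁻¹' (Set.Ioi c))).Nonempty} :=
    fun O hO c => hmeas _ (hO.inter ((isOpen_Ioi).preimage x.continuous))
  have hmeasI : MeasurableSet I := measurableSet_Icc
  -- measurability of the (truncated) support function
  set sf' : ℝ → ℝ := fun τ => if τ ∈ I then sf τ else 0 with hsf'
  have hsf'_meas : Measurable sf' := by
    apply measurable_of_Ioi
    intro c
    have : sf' ⁻¹' Set.Ioi c =
        {τ | τ ∈ I ∧ (G τ ∩ (Set.univ ∩ (fun y => x y) ⁻¹' (Set.Ioi c))).Nonempty} ∪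
          (Iᶜ ∩ (if (0:ℝ) > c then Set.univ else ∅)) := by
      ext τ
      by_cases hτ : τ ∈ I
      · simp only [Set.mem_preimage, Set.mem_Ioi, Set.mem_union, Set.mem_inter_iff,
          Set.mem_compl_iff, Set.mem_setOf_eq, hτ, hsf', if_pos hτ, Set.univ_inter]
        rw [← hsup_lt τ hτ c]
        simp
      · simp only [Set.mem_preimage, Set.mem_Ioi, Set.mem_union, Set.mem_inter_iff,
          Set.mem_compl_iff, Set.mem_setOf_eq, hτ, hsf', if_neg hτ, Set.univ_inter]
        by_cases hc : (0:ℝ) > c <;> simp [hc]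
    rw [this]
    refine (hmeas' _ isOpen_univ c).union (hmeasI.compl.inter ?_)
    by_cases hc : (0:ℝ) > c <;> simp [hc]
  -- integrability of the support function
  have hk_nonneg : ∀ᵐ τ ∂(volume.restrict I), τ ∈ I → 0 ≤ k τ := by
    filter_upwards [hk_bd] with τ hτ hτI
    obtain ⟨y, hy⟩ := hne τ hτI
    exact le_trans (norm_nonneg y) (hτ y hy)
  have hsf'_bound : ∀ᵐ τ ∂(volume.restrict I), ‖sf' τ‖ ≤ ‖x‖ * k τ := by
    filter_upwards [hk_bd, ae_restrict_mem hmeasI] with τ hτ hτI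
    obtain ⟨y0, hy0⟩ := hne τ hτI
    have hky : ∀ y ∈ G τ, |x y| ≤ ‖x‖ * k τ := by
      intro y hy
      calc |x y| = ‖x y‖ := rfl
      _ ≤ ‖x‖ * ‖y‖ := x.le_opNorm y
      _ ≤ ‖x‖ * k τ := mul_le_mul_of_nonneg_left (hτ y hy) (norm_nonneg x)
    show ‖sf' τ‖ ≤ ‖x‖ * k τ
    rw [show sf' τ = sf τ from if_pos hτI, Real.norm_eq_abs, abs_le]
    constructor
    · calc -(‖x‖ * k τ) ≤ -|x y0| := neg_le_neg (hky y0 hy0)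
      _ ≤ x y0 := neg_abs_le _
      _ ≤ sf τ := le_csSup (hbddA τ hτI) (Set.mem_image_of_mem _ hy0)
    · refine csSup_le (himg_ne τ hτI) ?_
      rintro _ ⟨y, hy, rfl⟩
      exact le_trans (le_abs_self _) (hky y hy)
  have hsf'_int : IntegrableOn sf' I volume :=
    Integrable.mono' (hk_int.const_mul ‖x‖) hsf'_meas.aestronglyMeasurable hsf'_bound
  have hsf'_intJ : IntegrableOn sf' J volume := hsf'_int.mono_set hJI
  -- upper bound for elements of the Aumann integral
  have hub : ∀ y ∈ aumannIntegral G J, x y ≤ ∫ τ in J, sf' τ := by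
    rintro y ⟨f, hf_int, hf_mem, rfl⟩
    have hcomp : x (∫ τ in J, f τ) = ∫ τ in J, x (f τ) := (x.integral_comp_comm hf_int).symm
    rw [hcomp]
    refine integral_mono_ae (x.integrable_comp hf_int) hsf'_intJ ?_
    filter_upwards [hf_mem, ae_restrict_mem measurableSet_Ioc] with τ hτ hτJ
    have hτI : τ ∈ I := hJI hτJ
    calc x (f τ) ≤ sf τ := le_csSup (hbddA τ hτI) (Set.mem_image_of_mem _ hτ)
    _ = sf' τ := (if_pos hτI).symm
  -- ε-optimal integrable selections
  have hsel : ∀ ε : ℝ, 0 < ε → ∃ f : ℝ → E, IntegrableOn f J volume ∧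
      (∀ τ ∈ J, f τ ∈ G τ) ∧ (∀ τ ∈ J, sf τ - ε ≤ x (f τ)) := by
    intro ε hε
    set F : ℝ → Set E := fun τ => if τ ∈ I then {y ∈ G τ | sf τ - ε < x y} else {0} with hF
    have hFne : ∀ τ, (F τ).Nonempty := by
      intro τ
      by_cases hτ : τ ∈ I
      · rw [hF]; simp only [if_pos hτ]
        have : sf τ - ε < sf τ := sub_lt_self _ hε
        obtain ⟨_, ⟨y, hy, rfl⟩, hgt⟩ := exists_lt_of_lt_csSup (himg_ne τ hτ) this
        exact ⟨y, hy, hgt⟩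
      · rw [hF]; simp only [if_neg hτ]
        exact ⟨0, rfl⟩
    have hFmeas : ∀ O : Set E, IsOpen O → MeasurableSet {τ | (F τ ∩ O).Nonempty} := by
      intro O hO
      have key : ∀ τ ∈ I, ((F τ ∩ O).Nonempty ↔ ∃ q : ℚ,
          (G τ ∩ (O ∩ (fun y => x y) ⁻¹' (Set.Ioi (q:ℝ)))).Nonempty ∧
          ¬ (G τ ∩ ((fun y => x y) ⁻¹' (Set.Ioi ((q:ℝ) + ε)))).Nonempty) := by
        intro τ hτ
        constructor
        · rintro ⟨y, hyF, hyO⟩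
          rw [hF] at hyF; simp only [if_pos hτ, Set.mem_setOf_eq] at hyF
          obtain ⟨hyG, hlt⟩ := hyF
          obtain ⟨q, hq1, hq2⟩ := exists_rat_btwn hlt
          refine ⟨q, ⟨y, hyG, hyO, hq2⟩, fun hcon => ?_⟩
          rw [← hsup_lt τ hτ ((q:ℝ) + ε)] at hcon
          linarith
        · rintro ⟨q, ⟨y, hyG, hyO, hygt⟩, hnot⟩
          rw [← hsup_lt τ hτ ((q:ℝ) + ε)] at hnot
          push_neg at hnot
          have hygt' : (q:ℝ) < x y := hygt
          refine ⟨y, ?_, hyO⟩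
          rw [hF]; simp only [if_pos hτ, Set.mem_setOf_eq]
          exact ⟨hyG, by linarith⟩
      have hset : {τ | (F τ ∩ O).Nonempty} =
          (⋃ q : ℚ, ({τ | τ ∈ I ∧ (G τ ∩ (O ∩ (fun y => x y) ⁻¹' (Set.Ioi (q:ℝ)))).Nonempty} \
            {τ | τ ∈ I ∧ (G τ ∩ (Set.univ ∩ (fun y => x y) ⁻¹' (Set.Ioi ((q:ℝ) + ε)))).Nonempty})) ∪
          (Iᶜ ∩ (if (0:E) ∈ O then Set.univ else ∅)) := by
        ext τ
        by_cases hτ : τ ∈ I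
        · simp only [Set.mem_union, Set.mem_iUnion, Set.mem_diff, Set.mem_setOf_eq,
            Set.mem_inter_iff, Set.mem_compl_iff, hτ, not_true, false_and, or_false,
            Set.univ_inter, true_and]
          rw [key τ hτ]
        · have hFτ : F τ = {0} := by rw [hF]; simp [hτ]
          simp only [Set.mem_union, Set.mem_iUnion, Set.mem_diff, Set.mem_setOf_eq,
            Set.mem_inter_iff, Set.mem_compl_iff, hτ, false_and, exists_const, false_or,
            not_false_iff, true_and, hFτ]
          by_cases h0 : (0:E) ∈ O <;> simp [h0, Set.singleton_inter_nonempty]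
      rw [hset]
      refine (MeasurableSet.iUnion (fun q =>
        ((hmeas _ (hO.inter ((isOpen_Ioi).preimage x.continuous))).diff
          (hmeas' Set.univ isOpen_univ _)))).union (hmeasI.compl.inter ?_)
      by_cases h0 : (0:E) ∈ O <;> simp [h0]
    obtain ⟨f, hf_meas, hf_cl⟩ := krn_selection F hFne hFmeas
    have hf_mem : ∀ τ ∈ I, f τ ∈ G τ ∧ sf τ - ε ≤ x (f τ) := by
      intro τ hτ
      have hclosed : IsClosed {y ∈ G τ | sf τ - ε ≤ x y} :=
        (hcl τ hτ).inter (isClosed_le continuous_const x.continuous)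
      have hsub : F τ ⊆ {y ∈ G τ | sf τ - ε ≤ x y} := by
        rw [hF]; simp only [if_pos hτ]
        rintro y ⟨h1, h2⟩; exact ⟨h1, le_of_lt h2⟩
      have := closure_minimal hsub hclosed (hf_cl τ)
      exact ⟨this.1, this.2⟩
    refine ⟨f, ?_, fun τ hτ => (hf_mem τ (hJI hτ)).1, fun τ hτ => (hf_mem τ (hJI hτ)).2⟩
    refine Integrable.mono' (hk_int.mono_set hJI)
      (hf_meas.stronglyMeasurable.aestronglyMeasurable) ?_
    filter_upwards [ae_restrict_of_ae_restrict_of_subset hJI hk_bd,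
      ae_restrict_mem measurableSet_Ioc] with τ hτ hτJ
    exact hτ (f τ) (hf_mem τ (hJI hτJ)).1
  -- nonemptiness and upper bound of the image set
  have hmemA : ∀ f : ℝ → E, IntegrableOn f J volume → (∀ τ ∈ J, f τ ∈ G τ) →
      (∫ τ in J, f τ) ∈ aumannIntegral G J := by
    intro f hf_int hf_mem
    refine ⟨f, hf_int, ?_, rfl⟩
    filter_upwards [ae_restrict_mem measurableSet_Ioc] with τ hτ
    exact hf_mem τ hτ
  obtain ⟨f₁, hf₁_int, hf₁_mem, _⟩ := hsel 1 one_pos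
  have hSne : ((fun y => x y) '' aumannIntegral G J).Nonempty :=
    ⟨x (∫ τ in J, f₁ τ), Set.mem_image_of_mem _ (hmemA f₁ hf₁_int hf₁_mem)⟩
  have hSbdd : BddAbove ((fun y => x y) '' aumannIntegral G J) := by
    refine ⟨∫ τ in J, sf' τ, ?_⟩
    rintro _ ⟨y, hy, rfl⟩
    exact hub y hy
  -- rewrite the goal
  have hgoal_rhs : ∫ τ in J, sf τ = ∫ τ in J, sf' τ :=
    setIntegral_congr_fun measurableSet_Ioc (fun τ hτ => (if_pos (hJI hτ)).symm)
  rw [show (∫ τ in Set.Ioc a b, sSup ((fun y => x y) '' G τ)) = ∫ τ in J, sf' τ from hgoal_rhs]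
  -- lower bound: for all ε > 0
  have hlow : ∀ ε : ℝ, 0 < ε →
      (∫ τ in J, sf' τ) - ε * (b - a) ≤ sSup ((fun y => x y) '' aumannIntegral G J) := by
    intro ε hε
    obtain ⟨f, hf_int, hf_mem, hf_opt⟩ := hsel ε hε
    have hy : (∫ τ in J, f τ) ∈ aumannIntegral G J := hmemA f hf_int hf_mem
    have h1 : (∫ τ in J, sf' τ) - ε * (b - a) ≤ x (∫ τ in J, f τ) := by
      have hcomp : x (∫ τ in J, f τ) = ∫ τ in J, x (f τ) := (x.integral_comp_comm hf_int).symm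
      have hconst : IntegrableOn (fun _ : ℝ => ε) J volume := by
        rw [integrableOn_const_iff]
        right
        rw [hJ, Real.volume_Ioc]
        exact ENNReal.ofReal_lt_top
      have hmono : ∫ τ in J, (sf' τ - ε) ≤ ∫ τ in J, x (f τ) := by
        refine integral_mono_ae (hsf'_intJ.sub hconst) (x.integrable_comp hf_int) ?_
        filter_upwards [ae_restrict_mem measurableSet_Ioc] with τ hτ
        have := hf_opt τ hτ
        have heq : sf' τ = sf τ := if_pos (hJI hτ)
        rw [heq]
        linarith
      have hsub : ∫ τ in J, (sf' τ - ε) = (∫ τ in J, sf' τ) - ε * (b - a) := by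
        rw [integral_sub hsf'_intJ hconst, setIntegral_const, hJ, Real.volume_real_Ioc_of_le hab,
          smul_eq_mul, mul_comm]
      rw [hcomp]
      linarith [hmono, hsub.symm.le]
    exact le_trans h1 (le_csSup hSbdd (Set.mem_image_of_mem _ hy))
  -- conclude
  refine le_antisymm (csSup_le hSne ?_) ?_
  · rintro _ ⟨y, hy, rfl⟩
    exact hub y hy
  · refine le_of_forall_pos_le_add ?_
    intro η hη
    have hba : (0:ℝ) ≤ b - a := by linarith
    set ε := η / (b - a + 1) with hεdef
    have hεpos : 0 < ε := div_pos hη (by linarith)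
    have hεb : ε * (b - a) ≤ η := by
      rw [hεdef, div_mul_eq_mul_div, div_le_iff₀ (by linarith : (0:ℝ) < b - a + 1)]
      nlinarith
    linarith [hlow ε hεpos]
end

section
/- Monotonicity of lower and upper sums under refinement: under the birth-and-growth assumptions, if Π′ is a refinement of the partition Π of [t₀, t], then s_Π ⊆ s_{Π′} and S_{Π′} ⊆ S_Π almost surely, where s_Π and S_Π are the lower and upper sums defined by s_Π = (B_{t₀} ⊕ ∫_{t₀}^t G dτ) ∪ ⋃_i (ΔB_{t_i} ⊕ ∫_{t_i}^t G dτ) and S_Π = (B_{t₀} ⊕ ∫_{t₀}^t G dτ) ∪ ⋃_i (ΔB_{t_i} ⊕ ∫_{t_{i-1}}^t G dτ). -/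
open MeasureTheory Pointwise

/-- The predictable σ-algebra on `Ω × ℝ` associated to a filtration, over time horizon `[t₀,T]`. -/
def predictableSigma {Ω : Type*} (𝓕 : ℝ → MeasurableSpace Ω) (t₀ T : ℝ) :
    MeasurableSpace (Ω × ℝ) :=
  MeasurableSpace.generateFrom
    {S | (∃ A : Set Ω, MeasurableSet[𝓕 t₀] A ∧ S = A ×ˢ ({t₀} : Set ℝ)) ∨
      (∃ A : Set Ω, ∃ s u : ℝ, t₀ ≤ s ∧ s < u ∧ u ≤ T ∧ MeasurableSet[𝓕 s] A ∧
        S = A ×ˢ Set.Ioc s u)}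

/-- `t : ℕ → ℝ` (up to index `n`) is a partition of `[t₀, tEnd]`. -/
def IsPartition (t₀ tEnd : ℝ) (n : ℕ) (t : ℕ → ℝ) : Prop :=
  t 0 = t₀ ∧ t n = tEnd ∧ ∀ i < n, t i < t (i + 1)

/-- The lower sum `s_Π(tEnd)` of the birth-and-growth process, for trajectories `B`, `G`. -/
noncomputable def lowerSum {E : Type*} [NormedAddCommGroup E] [NormedSpace ℝ E]
    (B G : ℝ → Set E) (tEnd : ℝ) (n : ℕ) (t : ℕ → ℝ) : Set E :=
  closure (B (t 0) + aumannIntegral G (Set.Ioc (t 0) tEnd)) ∪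
    ⋃ i ∈ Finset.Icc 1 n,
      closure ((B (t i) \ interior (B (t (i - 1)))) + aumannIntegral G (Set.Ioc (t i) tEnd))

/-- The upper sum `S_Π(tEnd)` of the birth-and-growth process, for trajectories `B`, `G`. -/
noncomputable def upperSum {E : Type*} [NormedAddCommGroup E] [NormedSpace ℝ E]
    (B G : ℝ → Set E) (tEnd : ℝ) (n : ℕ) (t : ℕ → ℝ) : Set E :=
  closure (B (t 0) + aumannIntegral G (Set.Ioc (t 0) tEnd)) ∪
    ⋃ i ∈ Finset.Icc 1 n,
      closure ((B (t i) \ interior (B (t (i - 1)))) + aumannIntegral G (Set.Ioc (t (i - 1)) tEnd))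

lemma aumannIntegral_anti {E : Type*} [NormedAddCommGroup E] [NormedSpace ℝ E]
    (G : ℝ → Set E) (hG0 : ∀ u, (0 : E) ∈ G u) {a a' b : ℝ} (h : a' ≤ a) :
    aumannIntegral G (Set.Ioc a b) ⊆ aumannIntegral G (Set.Ioc a' b) := by
  rintro y ⟨f, hf, hmem, rfl⟩
  refine ⟨Set.indicator (Set.Ioc a b) f, ?_, ?_, ?_⟩
  · exact (hf.integrable_indicator measurableSet_Ioc).integrableOn
  · have h1 : ∀ᵐ τ ∂volume, τ ∈ Set.Ioc a b → f τ ∈ G τ :=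
      (ae_restrict_iff' measurableSet_Ioc).mp hmem
    refine ae_restrict_of_ae (h1.mono fun τ hτ => ?_)
    by_cases hτ' : τ ∈ Set.Ioc a b
    · rw [Set.indicator_of_mem hτ']; exact hτ hτ'
    · rw [Set.indicator_of_notMem hτ']; exact hG0 τ
  · rw [MeasureTheory.setIntegral_indicator measurableSet_Ioc,
      Set.inter_eq_self_of_subset_right (Set.Ioc_subset_Ioc_left h)]

lemma exists_delta {E : Type*} [TopologicalSpace E] (C : ℕ → Set E) (hmono : ∀ i j, i ≤ j → C i ⊆ C j)
    {x : E} {a : ℕ} : ∀ {b : ℕ}, a < b → x ∈ C b → x ∉ interior (C a) →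
    ∃ k, a < k ∧ k ≤ b ∧ x ∈ C k \ interior (C (k - 1)) := by
  intro b
  induction b with
  | zero => omega
  | succ b ih =>
    intro hab hx hx'
    rcases eq_or_lt_of_le (Nat.lt_succ_iff.mp hab) with heq | hlt
    · exact ⟨b + 1, hab, le_refl _, hx, by simpa [← heq] using hx'⟩
    · by_cases hxb : x ∈ interior (C b)
      · obtain ⟨k, h1, h2, h3⟩ := ih hlt (interior_subset hxb) hx'
        exact ⟨k, h1, h2.trans (Nat.le_succ b), h3⟩
      · exact ⟨b + 1, hab, le_refl _, hx, by simpa using hxb⟩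

lemma exists_interval {t : ℕ → ℝ} {c : ℝ} :
    ∀ {n : ℕ}, t 0 < c → c ≤ t n → ∃ i, 1 ≤ i ∧ i ≤ n ∧ t (i - 1) < c ∧ c ≤ t i := by
  intro n
  induction n with
  | zero => intro h1 h2; linarith
  | succ n ih =>
    intro h1 h2
    by_cases hc : c ≤ t n
    · obtain ⟨i, a, b, d, e⟩ := ih h1 hc
      exact ⟨i, a, b.trans (Nat.le_succ n), d, e⟩
    · exact ⟨n + 1, by omega, le_refl _, by push_neg at hc; simpa using hc, h2⟩

lemma part_mono {n : ℕ} {t : ℕ → ℝ} (h : ∀ i < n, t i < t (i + 1)) :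
    ∀ {i j}, i ≤ j → j ≤ n → t i ≤ t j := by
  intro i j hij
  induction hij with
  | refl => intro _; exact le_rfl
  | @step j hj ih =>
    intro hjn
    exact (ih (by omega)).trans (h j (by omega)).le

lemma part_strict {n : ℕ} {t : ℕ → ℝ} (h : ∀ i < n, t i < t (i + 1)) :
    ∀ {i j}, i < j → j ≤ n → t i < t j := by
  intro i j hij hjn
  calc t i ≤ t (j - 1) := part_mono h (by omega) (by omega)
    _ < t j := by have := h (j-1) (by omega); simpa [Nat.sub_add_cancel (by omega : 1 ≤ j)] using this

/-- Monotonicity of lower and upper sums under refinement of the partition. -/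
theorem lowerSum_upperSum_refinement
    {Ω : Type*} [mΩ : MeasurableSpace Ω]
    {E : Type*} [NormedAddCommGroup E] [NormedSpace ℝ E] [CompleteSpace E]
    [TopologicalSpace.SeparableSpace (StrongDual ℝ E)]
    (hrefl : Function.Surjective (NormedSpace.inclusionInDoubleDual ℝ E))
    (t₀ T : ℝ) (hT : t₀ ≤ T)
    (P : Measure Ω) [IsProbabilityMeasure P]
    (𝓕 : ℝ → MeasurableSpace Ω) (h𝓕mono : Monotone 𝓕) (h𝓕le : ∀ u, 𝓕 u ≤ mΩ)
    (B G : Ω → ℝ → Set E) (K : Set E) (hK : Bornology.IsBounded K)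
    (hBvals : ∀ ω u, (B ω u).Nonempty ∧ IsClosed (B ω u))
    (hBmono : ∀ ω, ∀ s u : ℝ, s ≤ u → B ω s ⊆ B ω u)
    (hBadapted : ∀ u : ℝ, ∀ O : Set E, IsOpen O →
      MeasurableSet[𝓕 u] {ω | (B ω u ∩ O).Nonempty})
    (hGvals : ∀ ω u, (G ω u).Nonempty ∧ IsClosed (G ω u) ∧ Convex ℝ (G ω u))
    (hG0 : ∀ ω u, (0 : E) ∈ G ω u) (hGsub : ∀ ω u, G ω u ⊆ K)
    (hGpred : ∀ O : Set E, IsOpen O →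
      MeasurableSet[predictableSigma 𝓕 t₀ T] {p : Ω × ℝ | (G p.1 p.2 ∩ O).Nonempty})
    (tEnd : ℝ) (htEnd : tEnd ∈ Set.Icc t₀ T)
    (n : ℕ) (t : ℕ → ℝ) (hpart : IsPartition t₀ tEnd n t)
    (m : ℕ) (t' : ℕ → ℝ) (hpart' : IsPartition t₀ tEnd m t')
    (hrefine : ∀ i ≤ n, ∃ j ≤ m, t' j = t i) :
    ∀ᵐ ω ∂P,
      lowerSum (B ω) (G ω) tEnd n t ⊆ lowerSum (B ω) (G ω) tEnd m t' ∧
      upperSum (B ω) (G ω) tEnd m t' ⊆ upperSum (B ω) (G ω) tEnd n t := by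
  obtain ⟨ht0, htn, htinc⟩ := hpart
  obtain ⟨ht0', htm', htinc'⟩ := hpart'
  refine MeasureTheory.ae_of_all P fun ω => ⟨?_, ?_⟩
  · -- lower sums
    have hclosed : IsClosed (lowerSum (B ω) (G ω) tEnd m t') := by
      refine IsClosed.union isClosed_closure ?_
      exact isClosed_biUnion_finset fun i _ => isClosed_closure
    simp only [lowerSum]
    apply Set.union_subset
    · have h00 : t 0 = t' 0 := by rw [ht0, ht0']
      rw [h00]
      exact Set.subset_union_left
    · refine Set.iUnion₂_subset fun i hi => ?_
      rw [Finset.mem_Icc] at hi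
      refine closure_minimal ?_ hclosed
      rintro z hz
      rw [Set.mem_add] at hz
      obtain ⟨x, hx, g, hg, rfl⟩ := hz
      obtain ⟨j, hjm, hj⟩ := hrefine i hi.2
      obtain ⟨j', hj'm, hj'⟩ := hrefine (i - 1) (by omega)
      have htlt : t (i - 1) < t i := part_strict htinc (by omega) hi.2
      have hjj' : j' < j := by
        by_contra hcon
        push_neg at hcon
        have := part_mono htinc' hcon hj'm
        rw [hj, hj'] at this; linarith
      set C : ℕ → Set E := fun l => B ω (t' (min l m)) with hC
      have hCmono : ∀ p q, p ≤ q → C p ⊆ C q := fun p q hpq =>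
        hBmono ω _ _ (part_mono htinc' (by omega : min p m ≤ min q m) (min_le_right _ _))
      have hxb : x ∈ C j := by
        simp only [hC, min_eq_left hjm, hj]; exact hx.1
      have hxa : x ∉ interior (C j') := by
        simp only [hC, min_eq_left hj'm, hj']; exact hx.2
      obtain ⟨k, hk1, hk2, hk3⟩ := exists_delta C hCmono hjj' hxb hxa
      have hkm : k ≤ m := hk2.trans hjm
      have hx' : x ∈ B ω (t' k) \ interior (B ω (t' (k - 1))) := by
        simpa only [hC, min_eq_left hkm, min_eq_left (by omega : k - 1 ≤ m)] using hk3
      have hki : t' k ≤ t i := by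
        rw [← hj]; exact part_mono htinc' hk2 hjm
      have hg' : g ∈ aumannIntegral (G ω) (Set.Ioc (t' k) tEnd) :=
        aumannIntegral_anti _ (hG0 ω) hki hg
      refine Set.mem_union_right _ (Set.mem_iUnion₂.mpr ⟨k, ?_, ?_⟩)
      · exact Finset.mem_Icc.mpr ⟨by omega, hkm⟩
      · exact subset_closure (Set.add_mem_add hx' hg')
  · -- upper sums
    simp only [upperSum]
    apply Set.union_subset
    · have h00 : t' 0 = t 0 := by rw [ht0, ht0']
      rw [h00]
      exact Set.subset_union_left
    · refine Set.iUnion₂_subset fun k hk => ?_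
      rw [Finset.mem_Icc] at hk
      have h0k : t 0 < t' k := by
        rw [ht0, ← ht0']; exact part_strict htinc' (by omega) hk.2
      have hkn : t' k ≤ t n := by
        rw [htn, ← htm']; exact part_mono htinc' hk.2 le_rfl
      obtain ⟨i, hi1, hin, hlt, hle⟩ := exists_interval h0k hkn
      obtain ⟨j', hj'm, hj'⟩ := hrefine (i - 1) (by omega)
      have hj'k : j' < k := by
        by_contra hcon
        push_neg at hcon
        have := part_mono htinc' hcon hj'm
        rw [hj'] at this; linarith
      have h1 : t (i - 1) ≤ t' (k - 1) := by
        rw [← hj']; exact part_mono htinc' (by omega) (by omega)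
      have hsub : (B ω (t' k) \ interior (B ω (t' (k - 1)))) +
            aumannIntegral (G ω) (Set.Ioc (t' (k - 1)) tEnd) ⊆
          (B ω (t i) \ interior (B ω (t (i - 1)))) +
            aumannIntegral (G ω) (Set.Ioc (t (i - 1)) tEnd) :=
        Set.add_subset_add
          (Set.diff_subset_diff (hBmono ω _ _ hle) (interior_mono (hBmono ω _ _ h1)))
          (aumannIntegral_anti _ (hG0 ω) h1)
      intro z hz
      exact Set.mem_union_right _
        (Set.mem_iUnion₂.mpr ⟨i, Finset.mem_Icc.mpr ⟨hi1, hin⟩, closure_mono hsub hz⟩)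
end

section
/- Hausdorff distance between lower and upper sums tends to zero: under the birth-and-growth assumptions, if (Π_j) is a sequence of partitions of [t₀, t] with mesh |Π_j| → 0, then d_H(s_{Π_j}, S_{Π_j}) → 0 almost surely; more precisely, d_H(s_{Π_j}, S_{Π_j}) ≤ |Π_j|(‖K‖_h + 1), where ‖K‖_h = sup_{k∈K}‖k‖. -/
open MeasureTheory Pointwise

/-- The mesh of a partition. -/
noncomputable def partitionMesh (n : ℕ) (t : ℕ → ℝ) (hn : 1 ≤ n) : ℝ :=
  (Finset.range n).sup' (by simp [Finset.nonempty_range_iff]; omega) (fun i => t (i + 1) - t i)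

section Aux

variable {E : Type*} [NormedAddCommGroup E] [NormedSpace ℝ E] [CompleteSpace E]

lemma partition_mono {n : ℕ} {t : ℕ → ℝ} (h : ∀ i < n, t i < t (i + 1))
    {a b : ℕ} (hab : a ≤ b) (hb : b ≤ n) : t a ≤ t b := by
  induction b with
  | zero => exact le_of_eq (congrArg t (Nat.le_zero.mp hab))
  | succ b ih =>
    rcases Nat.eq_or_lt_of_le hab with rfl | hlt
    · exact le_rfl
    · exact le_trans (ih (Nat.lt_succ_iff.mp hlt) (le_trans (Nat.le_succ b) hb))
        (le_of_lt (h b (by omega)))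

lemma aumannIntegral_mono_set (G : ℝ → Set E) (hG0 : ∀ u, (0 : E) ∈ G u)
    {s u : Set ℝ} (hs : MeasurableSet s) (hu : MeasurableSet u) (hsu : s ⊆ u) :
    aumannIntegral G s ⊆ aumannIntegral G u := by
  rintro y ⟨f, hfi, hfae, rfl⟩
  refine ⟨s.indicator f, ((integrable_indicator_iff hs).mpr hfi).integrableOn, ?_, ?_⟩
  · have hrestr : volume.restrict u = volume.restrict s + volume.restrict (u \ s) := by
      rw [← Measure.restrict_union disjoint_sdiff_self_right (hu.diff hs),
        Set.union_diff_cancel hsu]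
    rw [hrestr, ae_add_measure_iff]
    constructor
    · filter_upwards [hfae, ae_restrict_mem hs] with τ h1 h2
      rwa [Set.indicator_of_mem h2]
    · filter_upwards [ae_restrict_mem (hu.diff hs)] with τ hτ
      rw [Set.indicator_of_notMem hτ.2]
      exact hG0 τ
  · rw [setIntegral_indicator hs, Set.inter_eq_self_of_subset_right hsu]

lemma key_hausdorffDist_bound (B G : ℝ → Set E) (K : Set E)
    (hK : Bornology.IsBounded K) (h0K : (0 : E) ∈ K)
    (hG0 : ∀ u, (0 : E) ∈ G u) (hGsub : ∀ u, G u ⊆ K)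
    (t₀ tEnd : ℝ) (n : ℕ) (hn : 1 ≤ n) (t : ℕ → ℝ)
    (hpart : IsPartition t₀ tEnd n t) :
    Metric.hausdorffDist (lowerSum B G tEnd n t) (upperSum B G tEnd n t) ≤
      partitionMesh n t hn * (sSup ((fun k => ‖k‖) '' K) + 1) := by
  obtain ⟨ht0, htn, hlt⟩ := hpart
  set M : ℝ := sSup ((fun k => ‖k‖) '' K) with hM
  obtain ⟨C, hC⟩ := isBounded_iff_forall_norm_le.mp hK
  have hMbdd : BddAbove ((fun k => ‖k‖) '' K) := by
    refine ⟨C, ?_⟩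
    rintro _ ⟨k, hk, rfl⟩
    exact hC k hk
  have hnormK : ∀ x ∈ K, ‖x‖ ≤ M := fun x hx => le_csSup hMbdd ⟨x, hx, rfl⟩
  have hM0 : 0 ≤ M := by simpa using hnormK 0 h0K
  set mesh : ℝ := partitionMesh n t hn with hmesh
  have hmesh_ge : ∀ i < n, t (i + 1) - t i ≤ mesh := fun i hi =>
    Finset.le_sup' (fun i => t (i + 1) - t i) (Finset.mem_range.mpr hi)
  have hmesh0 : 0 ≤ mesh := by
    have h1 := hmesh_ge 0 (by omega)
    have h2 := hlt 0 (by omega)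
    linarith
  have hr0 : 0 ≤ mesh * (M + 1) := mul_nonneg hmesh0 (by linarith)
  -- lower sum is contained in upper sum
  have hsub : lowerSum B G tEnd n t ⊆ upperSum B G tEnd n t := by
    unfold lowerSum upperSum
    refine Set.union_subset_union_right _ (Set.iUnion₂_mono fun i hi => ?_)
    refine closure_mono (Set.add_subset_add_left ?_)
    have hi' : 1 ≤ i ∧ i ≤ n := by simpa [Finset.mem_Icc] using hi
    refine aumannIntegral_mono_set G hG0 measurableSet_Ioc measurableSet_Ioc
      (Set.Ioc_subset_Ioc_left ?_)
    exact partition_mono hlt (Nat.sub_le i 1) hi'.2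
  apply Metric.hausdorffDist_le_of_infDist hr0
  · intro x hx
    have hx' : x ∈ upperSum B G tEnd n t := hsub hx
    have h0 : Metric.infDist x (upperSum B G tEnd n t) ≤ 0 := by
      simpa using @Metric.infDist_le_dist_of_mem E _ _ x x hx'
    exact h0.trans hr0
  · intro x hx
    rcases hx with hx | hx
    · have hx' : x ∈ lowerSum B G tEnd n t := Or.inl hx
      have h0 : Metric.infDist x (lowerSum B G tEnd n t) ≤ 0 := by
        simpa using @Metric.infDist_le_dist_of_mem E _ _ x x hx'
      exact h0.trans hr0
    · simp only [Set.mem_iUnion] at hx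
      obtain ⟨i, hi, hxi⟩ := hx
      have hi' : 1 ≤ i ∧ i ≤ n := by simpa [Finset.mem_Icc] using hi
      set a : ℝ := t (i - 1) with ha
      set c : ℝ := t i with hc
      have hisub : i - 1 < n := by omega
      have hieq : i - 1 + 1 = i := by omega
      have hac : a < c := by
        have := hlt (i - 1) hisub
        rwa [hieq] at this
      have hct : c ≤ tEnd := by
        rw [← htn]
        exact partition_mono hlt hi'.2 le_rfl
      have hca_mesh : c - a ≤ mesh := by
        have := hmesh_ge (i - 1) hisub
        rwa [hieq] at this
      -- every point of the (non-closed) i-th piece of the upper sum is close to lowerSum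
      have hpiece : ∀ y ∈ (B (t i) \ interior (B (t (i - 1)))) +
          aumannIntegral G (Set.Ioc a tEnd),
          Metric.infDist y (lowerSum B G tEnd n t) ≤ mesh * (M + 1) := by
        rintro y ⟨b, hb, z, ⟨f, hfi, hfae, rfl⟩, rfl⟩
        have hsubIoc : Set.Ioc c tEnd ⊆ Set.Ioc a tEnd :=
          Set.Ioc_subset_Ioc_left (le_of_lt hac)
        have hsubIoc' : Set.Ioc a c ⊆ Set.Ioc a tEnd :=
          Set.Ioc_subset_Ioc_right hct
        have hfi1 : IntegrableOn f (Set.Ioc a c) volume := hfi.mono_set hsubIoc'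
        have hfi2 : IntegrableOn f (Set.Ioc c tEnd) volume := hfi.mono_set hsubIoc
        have hy' : b + ∫ τ in Set.Ioc c tEnd, f τ ∈ lowerSum B G tEnd n t := by
          refine Or.inr ?_
          simp only [Set.mem_iUnion]
          exact ⟨i, hi, subset_closure
            ⟨b, hb, _, ⟨f, hfi2, ae_restrict_of_ae_restrict_of_subset hsubIoc hfae, rfl⟩, rfl⟩⟩
        refine le_trans (Metric.infDist_le_dist_of_mem hy') ?_
        have hsplit : (∫ τ in Set.Ioc a tEnd, f τ) =
            (∫ τ in Set.Ioc a c, f τ) + ∫ τ in Set.Ioc c tEnd, f τ := by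
          rw [← setIntegral_union (Set.Ioc_disjoint_Ioc_of_le le_rfl) measurableSet_Ioc hfi1 hfi2,
            Set.Ioc_union_Ioc_eq_Ioc (le_of_lt hac) hct]
        have hdist : dist (b + ∫ τ in Set.Ioc a tEnd, f τ)
            (b + ∫ τ in Set.Ioc c tEnd, f τ) = ‖∫ τ in Set.Ioc a c, f τ‖ := by
          rw [dist_eq_norm]
          congr 1
          rw [hsplit]
          abel
        rw [hdist]
        have hbound : ‖∫ τ in Set.Ioc a c, f τ‖ ≤ M * (c - a) := by
          have hvol : volume (Set.Ioc a c) < ⊤ := by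
            rw [Real.volume_Ioc]; exact ENNReal.ofReal_lt_top
          have hae : ∀ᵐ τ ∂volume.restrict (Set.Ioc a c), ‖f τ‖ ≤ M := by
            filter_upwards [ae_restrict_of_ae_restrict_of_subset hsubIoc' hfae] with τ hτ
            exact hnormK _ (hGsub τ hτ)
          have := norm_setIntegral_le_of_norm_le_const_ae hvol hae
          rwa [Real.volume_real_Ioc, max_eq_left (by linarith)] at this
        calc ‖∫ τ in Set.Ioc a c, f τ‖ ≤ M * (c - a) := hbound
          _ ≤ M * mesh := by nlinarith
          _ ≤ mesh * (M + 1) := by nlinarith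
      -- extend to the closure
      have hclosed : IsClosed {p : E | Metric.infDist p (lowerSum B G tEnd n t) ≤
          mesh * (M + 1)} :=
        isClosed_le (Metric.continuous_infDist_pt _) continuous_const
      exact closure_minimal hpiece hclosed hxi

end Aux

/-- The Hausdorff distance between lower and upper sums is bounded by
`|Π|(‖K‖_h + 1)` and tends to `0` along any sequence of partitions with mesh tending to `0`. -/
theorem hausdorffDist_lowerSum_upperSum_tendsto_zero
    {Ω : Type*} [mΩ : MeasurableSpace Ω]
    {E : Type*} [NormedAddCommGroup E] [NormedSpace ℝ E] [CompleteSpace E]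
    [TopologicalSpace.SeparableSpace (StrongDual ℝ E)]
    (hrefl : Function.Surjective (NormedSpace.inclusionInDoubleDual ℝ E))
    (t₀ T : ℝ) (hT : t₀ ≤ T)
    (P : Measure Ω) [IsProbabilityMeasure P]
    (𝓕 : ℝ → MeasurableSpace Ω) (h𝓕mono : Monotone 𝓕) (h𝓕le : ∀ u, 𝓕 u ≤ mΩ)
    (B G : Ω → ℝ → Set E) (K : Set E) (hK : Bornology.IsBounded K)
    (hBvals : ∀ ω u, (B ω u).Nonempty ∧ IsClosed (B ω u))
    (hBmono : ∀ ω, ∀ s u : ℝ, s ≤ u → B ω s ⊆ B ω u)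
    (hBadapted : ∀ u : ℝ, ∀ O : Set E, IsOpen O →
      MeasurableSet[𝓕 u] {ω | (B ω u ∩ O).Nonempty})
    (hGvals : ∀ ω u, (G ω u).Nonempty ∧ IsClosed (G ω u) ∧ Convex ℝ (G ω u))
    (hG0 : ∀ ω u, (0 : E) ∈ G ω u) (hGsub : ∀ ω u, G ω u ⊆ K)
    (hGpred : ∀ O : Set E, IsOpen O →
      MeasurableSet[predictableSigma 𝓕 t₀ T] {p : Ω × ℝ | (G p.1 p.2 ∩ O).Nonempty})
    (tEnd : ℝ) (htEnd : tEnd ∈ Set.Icc t₀ T)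
    (N : ℕ → ℕ) (hN : ∀ j, 1 ≤ N j) (t : ℕ → ℕ → ℝ)
    (hpart : ∀ j, IsPartition t₀ tEnd (N j) (t j))
    (hmesh : Filter.Tendsto (fun j => partitionMesh (N j) (t j) (hN j))
      Filter.atTop (nhds 0)) :
    ∀ᵐ ω ∂P,
      (∀ j, Metric.hausdorffDist (lowerSum (B ω) (G ω) tEnd (N j) (t j))
          (upperSum (B ω) (G ω) tEnd (N j) (t j)) ≤
        partitionMesh (N j) (t j) (hN j) * (sSup ((fun k => ‖k‖) '' K) + 1)) ∧
      Filter.Tendsto (fun j => Metric.hausdorffDist (lowerSum (B ω) (G ω) tEnd (N j) (t j))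
          (upperSum (B ω) (G ω) tEnd (N j) (t j))) Filter.atTop (nhds 0) := by
  refine MeasureTheory.ae_of_all _ fun ω => ?_
  have h0K : (0 : E) ∈ K := hGsub ω t₀ (hG0 ω t₀)
  have hbound : ∀ j, Metric.hausdorffDist (lowerSum (B ω) (G ω) tEnd (N j) (t j))
      (upperSum (B ω) (G ω) tEnd (N j) (t j)) ≤
      partitionMesh (N j) (t j) (hN j) * (sSup ((fun k => ‖k‖) '' K) + 1) := fun j =>
    key_hausdorffDist_bound (B ω) (G ω) K hK h0K (hG0 ω) (hGsub ω) t₀ tEnd (N j) (hN j)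
      (t j) (hpart j)
  refine ⟨hbound, ?_⟩
  have hlim : Filter.Tendsto
      (fun j => partitionMesh (N j) (t j) (hN j) * (sSup ((fun k => ‖k‖) '' K) + 1))
      Filter.atTop (nhds 0) := by
    have := hmesh.mul_const (sSup ((fun k => ‖k‖) '' K) + 1)
    simpa using this
  exact squeeze_zero (fun j => Metric.hausdorffDist_nonneg) hbound hlim
end

section
/- Independence of the limit from the refinement sequence: under the birth-and-growth assumptions, if (Π_j) and (Π′_l) are two refinement sequences of partitions of [t₀,t] with meshes tending to 0, then d_H(s_{Π_j}, s_{Π′_l}) → 0 and d_H(S_{Π_j}, S_{Π′_l}) → 0 as j, l → ∞, almost surely. In particular, the closure of the union of the s_{Π_j} equals the intersection of the S_{Π_j} and this common limit is independent of the chosen refinement sequence. -/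
open MeasureTheory Pointwise

section Aux

open Set Metric MeasureTheory

variable {E : Type*} [NormedAddCommGroup E] [NormedSpace ℝ E] [CompleteSpace E]

lemma partMono {n : ℕ} {t : ℕ → ℝ} (h : ∀ i < n, t i < t (i + 1)) :
    ∀ {i j : ℕ}, i ≤ j → j ≤ n → t i ≤ t j := by
  intro i j hij hjn
  induction j with
  | zero =>
    have : i = 0 := by omega
    subst this; exact le_rfl
  | succ j ih =>
    rcases Nat.lt_or_ge i (j + 1) with h1 | h1
    · exact le_trans (ih (Nat.lt_succ_iff.mp h1) (by omega)) (le_of_lt (h j (by omega)))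
    · have : i = j + 1 := by omega
      subst this; exact le_rfl

lemma partStrictMono {n : ℕ} {t : ℕ → ℝ} (h : ∀ i < n, t i < t (i + 1)) :
    ∀ {i j : ℕ}, i < j → j ≤ n → t i < t j := by
  intro i j hij hjn
  exact lt_of_lt_of_le (h i (by omega)) (partMono h (by omega) hjn)

lemma zero_mem_aumann (G : ℝ → Set E) (hG0 : ∀ u, (0 : E) ∈ G u) (s : Set ℝ) :
    (0 : E) ∈ aumannIntegral G s :=
  ⟨fun _ => 0, (integrable_zero _ _ _).integrableOn,
    Filter.Eventually.of_forall fun τ => hG0 τ, by simp⟩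

lemma aumann_mono (G : ℝ → Set E) (hG0 : ∀ u, (0 : E) ∈ G u) {s s' tEnd : ℝ} (h : s ≤ s') :
    aumannIntegral G (Set.Ioc s' tEnd) ⊆ aumannIntegral G (Set.Ioc s tEnd) := by
  rintro y ⟨f, hint, hmem, rfl⟩
  refine ⟨(Set.Ioc s' tEnd).indicator f,
    (hint.integrable_indicator measurableSet_Ioc).integrableOn, ?_, ?_⟩
  · rw [ae_restrict_iff' measurableSet_Ioc] at hmem ⊢
    filter_upwards [hmem] with τ h1 _
    by_cases hτ : τ ∈ Set.Ioc s' tEnd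
    · rw [Set.indicator_of_mem hτ]; exact h1 hτ
    · rw [Set.indicator_of_notMem hτ]; exact hG0 τ
  · rw [MeasureTheory.setIntegral_indicator measurableSet_Ioc,
      Set.inter_eq_self_of_subset_right (Set.Ioc_subset_Ioc_left h)]

lemma aumann_approx (G : ℝ → Set E) {C : ℝ} (hGC : ∀ u, ∀ x ∈ G u, ‖x‖ ≤ C)
    {s s' tEnd : ℝ} (h1 : s ≤ s') (h2 : s' ≤ tEnd) :
    ∀ y ∈ aumannIntegral G (Set.Ioc s tEnd),
      ∃ y' ∈ aumannIntegral G (Set.Ioc s' tEnd), ‖y - y'‖ ≤ C * (s' - s) := by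
  rintro y ⟨f, hint, hmem, rfl⟩
  have hsub : Set.Ioc s' tEnd ⊆ Set.Ioc s tEnd := Set.Ioc_subset_Ioc_left h1
  have hsub2 : Set.Ioc s s' ⊆ Set.Ioc s tEnd := Set.Ioc_subset_Ioc_right h2
  refine ⟨∫ τ in Set.Ioc s' tEnd, f τ,
    ⟨f, hint.mono_set hsub, ae_restrict_of_ae_restrict_of_subset hsub hmem, rfl⟩, ?_⟩
  have hsplit : (∫ τ in Set.Ioc s tEnd, f τ)
      = (∫ τ in Set.Ioc s s', f τ) + ∫ τ in Set.Ioc s' tEnd, f τ := by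
    rw [← MeasureTheory.setIntegral_union (Set.Ioc_disjoint_Ioc_of_le le_rfl) measurableSet_Ioc
      (hint.mono_set hsub2) (hint.mono_set hsub), Set.Ioc_union_Ioc_eq_Ioc h1 h2]
  rw [hsplit, add_sub_cancel_right]
  have hbd : ∀ᵐ τ ∂(volume.restrict (Set.Ioc s s')), ‖f τ‖ ≤ C := by
    filter_upwards [ae_restrict_of_ae_restrict_of_subset hsub2 hmem] with τ hτ
    exact hGC τ _ hτ
  calc ‖∫ τ in Set.Ioc s s', f τ‖ ≤ C * (volume (Set.Ioc s s')).toReal :=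
        MeasureTheory.norm_setIntegral_le_of_norm_le_const_ae
          (by rw [Real.volume_Ioc]; exact ENNReal.ofReal_lt_top) hbd
    _ = C * (s' - s) := by rw [Real.volume_Ioc, ENNReal.toReal_ofReal (by linarith)]

lemma lowerSum_subset_upperSum (B G : ℝ → Set E) (hG0 : ∀ u, (0 : E) ∈ G u)
    {tEnd : ℝ} {n : ℕ} {t : ℕ → ℝ} (hmono : ∀ i < n, t i < t (i + 1)) :
    lowerSum B G tEnd n t ⊆ upperSum B G tEnd n t := by
  apply Set.union_subset Set.subset_union_left
  refine Set.iUnion₂_subset fun i hi => ?_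
  have hi' := Finset.mem_Icc.mp hi
  intro z hz
  refine Set.mem_union_right _ (Set.mem_iUnion₂.mpr ⟨i, hi, ?_⟩)
  exact closure_mono (Set.add_subset_add Set.Subset.rfl
    (aumann_mono G hG0 (partMono hmono (Nat.sub_le i 1) hi'.2))) hz

lemma upperSum_isClosed (B G : ℝ → Set E) (tEnd : ℝ) (n : ℕ) (t : ℕ → ℝ) :
    IsClosed (upperSum B G tEnd n t) :=
  isClosed_closure.union (isClosed_biUnion_finset fun _ _ => isClosed_closure)

lemma lowerSum_nonempty (B G : ℝ → Set E) (tEnd : ℝ) (n : ℕ) (t : ℕ → ℝ)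
    (hB : (B (t 0)).Nonempty) (hG0 : ∀ u, (0 : E) ∈ G u) :
    (lowerSum B G tEnd n t).Nonempty := by
  obtain ⟨b, hb⟩ := hB
  exact ⟨b + 0, Set.mem_union_left _ (subset_closure
    (Set.add_mem_add hb (zero_mem_aumann G hG0 _)))⟩

lemma refine_lowerSum (B G : ℝ → Set E) (hG0 : ∀ u, (0 : E) ∈ G u)
    {t₀ tEnd : ℝ} {n m : ℕ} {t u : ℕ → ℝ}
    (hP : IsPartition t₀ tEnd n t) (hQ : IsPartition t₀ tEnd m u)
    (href : ∀ i ≤ n, ∃ j ≤ m, u j = t i) :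
    lowerSum B G tEnd n t ⊆ lowerSum B G tEnd m u := by
  classical
  obtain ⟨hP0, hPn, hPlt⟩ := hP
  obtain ⟨hQ0, hQm, hQlt⟩ := hQ
  apply Set.union_subset
  · rw [hP0, ← hQ0]; exact Set.subset_union_left
  refine Set.iUnion₂_subset fun i hi => ?_
  have hi' := Finset.mem_Icc.mp hi
  obtain ⟨k, hk, hki⟩ := href i hi'.2
  obtain ⟨q, hq, hqi⟩ := href (i - 1) (le_trans (Nat.sub_le i 1) hi'.2)
  have hqk : q < k := by
    by_contra hc
    push_neg at hc
    have h1 : u k ≤ u q := partMono hQlt hc hq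
    rw [hki, hqi] at h1
    exact absurd h1 (not_le.mpr (partStrictMono hPlt (by omega) hi'.2))
  have hTclosed : IsClosed (⋃ p ∈ Finset.Icc (q + 1) k,
      closure ((B (u p) \ interior (B (u (p - 1)))) + aumannIntegral G (Set.Ioc (u p) tEnd))) :=
    isClosed_biUnion_finset fun _ _ => isClosed_closure
  have hsub : (B (t i) \ interior (B (t (i - 1)))) + aumannIntegral G (Set.Ioc (t i) tEnd)
      ⊆ ⋃ p ∈ Finset.Icc (q + 1) k,
        closure ((B (u p) \ interior (B (u (p - 1)))) + aumannIntegral G (Set.Ioc (u p) tEnd)) := by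
    rintro z hz
    rw [Set.mem_add] at hz
    obtain ⟨d, hd, y, hy, rfl⟩ := hz
    have hdk : d ∈ B (u k) := by rw [hki]; exact hd.1
    have hdq : d ∉ interior (B (u q)) := by rw [hqi]; exact hd.2
    have hex : ∃ p, q < p ∧ d ∈ B (u p) := ⟨k, hqk, hdk⟩
    obtain ⟨hqp, hdp⟩ := Nat.find_spec hex
    set p := Nat.find hex with hpdef
    have hpk : p ≤ k := Nat.find_min' hex ⟨hqk, hdk⟩
    have hnot : d ∉ interior (B (u (p - 1))) := by
      rcases eq_or_lt_of_le (Nat.succ_le_of_lt hqp) with h1 | h1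
      · have hpq : p - 1 = q := by omega
        rw [hpq]; exact hdq
      · have hmin := Nat.find_min hex (show p - 1 < p by omega)
        intro hcon
        exact hmin ⟨by omega, interior_subset hcon⟩
    have hy' : y ∈ aumannIntegral G (Set.Ioc (u p) tEnd) := by
      apply aumann_mono G hG0 (partMono hQlt hpk hk)
      rw [hki]; exact hy
    have hmem : d + y ∈ (B (u p) \ interior (B (u (p - 1))))
        + aumannIntegral G (Set.Ioc (u p) tEnd) := Set.add_mem_add ⟨hdp, hnot⟩ hy'
    exact Set.mem_iUnion₂.mpr ⟨p, Finset.mem_Icc.mpr ⟨by omega, hpk⟩, subset_closure hmem⟩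
  intro z hz
  have hzT := closure_minimal hsub hTclosed hz
  rw [Set.mem_iUnion₂] at hzT
  obtain ⟨p, hp, hzp⟩ := hzT
  have hp' := Finset.mem_Icc.mp hp
  exact Set.mem_union_right _
    (Set.mem_iUnion₂.mpr ⟨p, Finset.mem_Icc.mpr ⟨by omega, le_trans hp'.2 hk⟩, hzp⟩)

lemma refine_upperSum (B G : ℝ → Set E) (hG0 : ∀ u, (0 : E) ∈ G u)
    (hBmono : ∀ s u : ℝ, s ≤ u → B s ⊆ B u)
    {t₀ tEnd : ℝ} {n m : ℕ} {t u : ℕ → ℝ}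
    (hP : IsPartition t₀ tEnd n t) (hQ : IsPartition t₀ tEnd m u)
    (href : ∀ i ≤ n, ∃ j ≤ m, u j = t i) :
    upperSum B G tEnd m u ⊆ upperSum B G tEnd n t := by
  classical
  obtain ⟨hP0, hPn, hPlt⟩ := hP
  obtain ⟨hQ0, hQm, hQlt⟩ := hQ
  apply Set.union_subset
  · rw [hQ0, ← hP0]; exact Set.subset_union_left
  refine Set.iUnion₂_subset fun p hp => ?_
  have hp' := Finset.mem_Icc.mp hp
  have hupm : u p ≤ u m := partMono hQlt hp'.2 le_rfl
  have hex : ∃ i, i ≤ n ∧ u p ≤ t i := ⟨n, le_rfl, by rw [hPn, ← hQm]; exact hupm⟩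
  obtain ⟨hin, hpi⟩ := Nat.find_spec hex
  set i := Nat.find hex with hidef
  have hi1 : 1 ≤ i := by
    by_contra hc
    have hi0 : i = 0 := by omega
    have h1 : u 0 < u p := partStrictMono hQlt (by omega) hp'.2
    rw [hi0] at hpi
    rw [hQ0, ← hP0] at h1
    linarith
  have hmin : t (i - 1) < u p := by
    have h := Nat.find_min hex (show i - 1 < i by omega)
    push_neg at h
    exact h (by omega)
  obtain ⟨q, hq, hqe⟩ := href (i - 1) (by omega)
  have hqp : q < p := by
    by_contra hc
    push_neg at hc
    have h := partMono hQlt hc hq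
    rw [hqe] at h
    linarith
  have hle : t (i - 1) ≤ u (p - 1) := by
    rw [← hqe]
    exact partMono hQlt (by omega) (by omega)
  have hsub : (B (u p) \ interior (B (u (p - 1)))) + aumannIntegral G (Set.Ioc (u (p - 1)) tEnd)
      ⊆ (B (t i) \ interior (B (t (i - 1)))) + aumannIntegral G (Set.Ioc (t (i - 1)) tEnd) :=
    Set.add_subset_add (Set.diff_subset_diff (hBmono _ _ hpi)
      (interior_mono (hBmono _ _ hle))) (aumann_mono G hG0 hle)
  intro z hz
  exact Set.mem_union_right _
    (Set.mem_iUnion₂.mpr ⟨i, Finset.mem_Icc.mpr ⟨hi1, hin⟩, closure_mono hsub hz⟩)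

lemma upperSum_infDist (B G : ℝ → Set E) {C δ : ℝ}
    (hG0 : ∀ u, (0 : E) ∈ G u) (hGC : ∀ u, ∀ x ∈ G u, ‖x‖ ≤ C)
    (hC0 : 0 ≤ C) (hδ0 : 0 ≤ δ)
    {t₀ tEnd : ℝ} {n : ℕ} {t : ℕ → ℝ} (hP : IsPartition t₀ tEnd n t)
    (hδ : ∀ i, 1 ≤ i → i ≤ n → t i - t (i - 1) ≤ δ) :
    ∀ x ∈ upperSum B G tEnd n t, Metric.infDist x (lowerSum B G tEnd n t) ≤ C * δ := by
  obtain ⟨hP0, hPn, hPlt⟩ := hP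
  have hCδ : 0 ≤ C * δ := mul_nonneg hC0 hδ0
  intro x hx
  rcases hx with hx | hx
  · have hmem : x ∈ lowerSum B G tEnd n t := Set.mem_union_left _ hx
    rw [Metric.infDist_zero_of_mem hmem]; exact hCδ
  · rw [Set.mem_iUnion₂] at hx
    obtain ⟨i, hi, hx⟩ := hx
    have hi' := Finset.mem_Icc.mp hi
    set L := lowerSum B G tEnd n t with hL
    have hLset : (B (t i) \ interior (B (t (i - 1))))
        + aumannIntegral G (Set.Ioc (t (i - 1)) tEnd)
        ⊆ {z | Metric.infDist z L ≤ C * δ} := by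
      rintro z hz
      rw [Set.mem_add] at hz
      obtain ⟨d, hd, y, hy, rfl⟩ := hz
      obtain ⟨y', hy', hnorm⟩ := aumann_approx G hGC
        (partMono hPlt (Nat.sub_le i 1) hi'.2)
        (by rw [← hPn]; exact partMono hPlt hi'.2 le_rfl) y hy
      have hmem : d + y' ∈ L := Set.mem_union_right _
        (Set.mem_iUnion₂.mpr ⟨i, hi, subset_closure (Set.add_mem_add hd hy')⟩)
      calc Metric.infDist (d + y) L ≤ dist (d + y) (d + y') :=
            Metric.infDist_le_dist_of_mem hmem
        _ = ‖y - y'‖ := by rw [dist_add_left, dist_eq_norm]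
        _ ≤ C * (t i - t (i - 1)) := hnorm
        _ ≤ C * δ := mul_le_mul_of_nonneg_left (hδ i hi'.1 hi'.2) hC0
    have hclosed : IsClosed {z : E | Metric.infDist z L ≤ C * δ} :=
      isClosed_le (Metric.continuous_infDist_pt L) continuous_const
    exact closure_minimal hLset hclosed hx

lemma exists_common_refinement {t₀ tEnd : ℝ} {n n' : ℕ} {t t' : ℕ → ℝ}
    (hP : IsPartition t₀ tEnd n t) (hQ : IsPartition t₀ tEnd n' t') :
    ∃ m : ℕ, ∃ u : ℕ → ℝ, IsPartition t₀ tEnd m u ∧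
      (∀ i ≤ n, ∃ j ≤ m, u j = t i) ∧ (∀ i ≤ n', ∃ j ≤ m, u j = t' i) := by
  classical
  obtain ⟨hP0, hPn, hPlt⟩ := hP
  obtain ⟨hQ0, hQn, hQlt⟩ := hQ
  set F : Finset ℝ := (Finset.range (n + 1)).image t ∪ (Finset.range (n' + 1)).image t'
    with hF
  have ht_mem : ∀ i ≤ n, t i ∈ F := fun i hi =>
    Finset.mem_union_left _ (Finset.mem_image_of_mem t (Finset.mem_range.mpr (by omega)))
  have ht'_mem : ∀ i ≤ n', t' i ∈ F := fun i hi =>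
    Finset.mem_union_right _ (Finset.mem_image_of_mem t' (Finset.mem_range.mpr (by omega)))
  have hFbound : ∀ x ∈ F, t₀ ≤ x ∧ x ≤ tEnd := by
    intro x hx
    rcases Finset.mem_union.mp hx with h | h
    · obtain ⟨i, hi, rfl⟩ := Finset.mem_image.mp h
      rw [Finset.mem_range] at hi
      constructor
      · rw [← hP0]; exact partMono hPlt (Nat.zero_le i) (by omega)
      · rw [← hPn]; exact partMono hPlt (by omega) le_rfl
    · obtain ⟨i, hi, rfl⟩ := Finset.mem_image.mp h
      rw [Finset.mem_range] at hi
      constructor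
      · rw [← hQ0]; exact partMono hQlt (Nat.zero_le i) (by omega)
      · rw [← hQn]; exact partMono hQlt (by omega) le_rfl
  have hcard : 0 < F.card := Finset.card_pos.mpr ⟨t 0, ht_mem 0 (Nat.zero_le n)⟩
  set m := F.card - 1 with hm
  set u : ℕ → ℝ := fun i => if h : i < F.card then F.orderEmbOfFin rfl ⟨i, h⟩ else tEnd
    with hu
  have hmem_u : ∀ x ∈ F, ∃ j ≤ m, u j = x := by
    intro x hx
    have hx' : x ∈ Set.range (F.orderEmbOfFin rfl) := by
      rw [Finset.range_orderEmbOfFin]; exact hx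
    obtain ⟨⟨j, hj⟩, hje⟩ := hx'
    refine ⟨j, by omega, ?_⟩
    rw [hu]; simp only [dif_pos hj]; exact hje
  have humono : ∀ i < m, u i < u (i + 1) := by
    intro i hi
    have h1 : i < F.card := by omega
    have h2 : i + 1 < F.card := by omega
    rw [hu]; simp only [dif_pos h1, dif_pos h2]
    exact (F.orderEmbOfFin rfl).strictMono (Fin.mk_lt_mk.mpr (Nat.lt_succ_self i))
  have hu_memF : ∀ i ≤ m, u i ∈ F := by
    intro i hi
    have h1 : i < F.card := by omega
    rw [hu]; simp only [dif_pos h1]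
    exact Finset.orderEmbOfFin_mem F rfl _
  have hu0 : u 0 = t₀ := by
    have h1 : u 0 ∈ F := hu_memF 0 (Nat.zero_le m)
    obtain ⟨j, hj, hje⟩ := hmem_u t₀ (by rw [← hP0]; exact ht_mem 0 (Nat.zero_le n))
    have h2 : u 0 ≤ u j := by
      rcases Nat.eq_zero_or_pos j with h | h
      · rw [h]
      · exact le_of_lt (partStrictMono humono h hj)
    rw [hje] at h2
    exact le_antisymm h2 (hFbound _ h1).1
  have hum : u m = tEnd := by
    have h1 : u m ∈ F := hu_memF m le_rfl
    obtain ⟨j, hj, hje⟩ := hmem_u tEnd (by rw [← hPn]; exact ht_mem n le_rfl)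
    have h2 : u j ≤ u m := partMono humono hj le_rfl
    rw [hje] at h2
    exact le_antisymm (hFbound _ h1).2 h2
  exact ⟨m, u, ⟨hu0, hum, humono⟩, fun i hi => hmem_u _ (ht_mem i hi),
    fun i hi => hmem_u _ (ht'_mem i hi)⟩

end Aux


/-- Independence of the limit from the refinement sequence: for any two refinement sequences
of partitions of `[t₀,t]` the lower (resp. upper) sums become arbitrarily Hausdorff-close to
each other; in particular the closure of the union of the lower sums equals the intersection
of the upper sums, independently of the chosen refinement sequence. -/
theorem lowerSum_upperSum_limit_independent_of_refinement
    {Ω : Type*} [mΩ : MeasurableSpace Ω]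
    {E : Type*} [NormedAddCommGroup E] [NormedSpace ℝ E] [CompleteSpace E]
    [TopologicalSpace.SeparableSpace (StrongDual ℝ E)]
    (hrefl : Function.Surjective (NormedSpace.inclusionInDoubleDual ℝ E))
    (t₀ T : ℝ) (hT : t₀ ≤ T)
    (P : Measure Ω) [IsProbabilityMeasure P]
    (𝓕 : ℝ → MeasurableSpace Ω) (h𝓕mono : Monotone 𝓕) (h𝓕le : ∀ u, 𝓕 u ≤ mΩ)
    (B G : Ω → ℝ → Set E) (K : Set E) (hK : Bornology.IsBounded K)
    (hBvals : ∀ ω u, (B ω u).Nonempty ∧ IsClosed (B ω u))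
    (hBmono : ∀ ω, ∀ s u : ℝ, s ≤ u → B ω s ⊆ B ω u)
    (hBadapted : ∀ u : ℝ, ∀ O : Set E, IsOpen O →
      MeasurableSet[𝓕 u] {ω | (B ω u ∩ O).Nonempty})
    (hGvals : ∀ ω u, (G ω u).Nonempty ∧ IsClosed (G ω u) ∧ Convex ℝ (G ω u))
    (hG0 : ∀ ω u, (0 : E) ∈ G ω u) (hGsub : ∀ ω u, G ω u ⊆ K)
    (hGpred : ∀ O : Set E, IsOpen O →
      MeasurableSet[predictableSigma 𝓕 t₀ T] {p : Ω × ℝ | (G p.1 p.2 ∩ O).Nonempty})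
    (tEnd : ℝ) (htEnd : tEnd ∈ Set.Icc t₀ T)
    (N N' : ℕ → ℕ) (hN : ∀ j, 1 ≤ N j) (hN' : ∀ l, 1 ≤ N' l)
    (t t' : ℕ → ℕ → ℝ)
    (hpart : ∀ j, IsPartition t₀ tEnd (N j) (t j))
    (hpart' : ∀ l, IsPartition t₀ tEnd (N' l) (t' l))
    (hrefseq : ∀ j, ∀ i ≤ N j, ∃ i' ≤ N (j + 1), t (j + 1) i' = t j i)
    (hrefseq' : ∀ l, ∀ i ≤ N' l, ∃ i' ≤ N' (l + 1), t' (l + 1) i' = t' l i)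
    (hmesh : Filter.Tendsto (fun j => partitionMesh (N j) (t j) (hN j))
      Filter.atTop (nhds 0))
    (hmesh' : Filter.Tendsto (fun l => partitionMesh (N' l) (t' l) (hN' l))
      Filter.atTop (nhds 0)) :
    ∀ᵐ ω ∂P,
      Filter.Tendsto (fun jl : ℕ × ℕ =>
          Metric.hausdorffDist (lowerSum (B ω) (G ω) tEnd (N jl.1) (t jl.1))
            (lowerSum (B ω) (G ω) tEnd (N' jl.2) (t' jl.2))) Filter.atTop (nhds 0) ∧
      Filter.Tendsto (fun jl : ℕ × ℕ =>
          Metric.hausdorffDist (upperSum (B ω) (G ω) tEnd (N jl.1) (t jl.1))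
            (upperSum (B ω) (G ω) tEnd (N' jl.2) (t' jl.2))) Filter.atTop (nhds 0) ∧
      closure (⋃ j, lowerSum (B ω) (G ω) tEnd (N j) (t j)) =
        ⋂ j, upperSum (B ω) (G ω) tEnd (N j) (t j) ∧
      closure (⋃ j, lowerSum (B ω) (G ω) tEnd (N j) (t j)) =
        closure (⋃ l, lowerSum (B ω) (G ω) tEnd (N' l) (t' l)) := by

  classical
  obtain ⟨r, hr⟩ := hK.subset_closedBall (0 : E)
  set C := max r 0 with hCdef
  have hC0 : 0 ≤ C := le_max_right r 0
  have hKC : ∀ x ∈ K, ‖x‖ ≤ C := fun x hx => by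
    have h := hr hx
    rw [Metric.mem_closedBall, dist_zero_right] at h
    exact h.trans (le_max_left r 0)
  refine Filter.Eventually.of_forall fun ω => ?_
  have hG0ω : ∀ u, (0 : E) ∈ G ω u := fun u => hG0 ω u
  have hGCω : ∀ u, ∀ x ∈ G ω u, ‖x‖ ≤ C := fun u x hx => hKC x (hGsub ω u hx)
  have hBmonoω : ∀ s u : ℝ, s ≤ u → B ω s ⊆ B ω u := fun s u h => hBmono ω s u h
  -- mesh estimates
  have hmeshle : ∀ j i, 1 ≤ i → i ≤ N j →
      t j i - t j (i - 1) ≤ partitionMesh (N j) (t j) (hN j) := by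
    intro j i h1 h2
    have h3 : i - 1 ∈ Finset.range (N j) := Finset.mem_range.mpr (by omega)
    have hle := Finset.le_sup' (fun k => t j (k + 1) - t j k) h3
    rw [show i - 1 + 1 = i from by omega] at hle
    exact hle
  have hmeshle' : ∀ l i, 1 ≤ i → i ≤ N' l →
      t' l i - t' l (i - 1) ≤ partitionMesh (N' l) (t' l) (hN' l) := by
    intro l i h1 h2
    have h3 : i - 1 ∈ Finset.range (N' l) := Finset.mem_range.mpr (by omega)
    have hle := Finset.le_sup' (fun k => t' l (k + 1) - t' l k) h3
    rw [show i - 1 + 1 = i from by omega] at hle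
    exact hle
  have hmesh0 : ∀ j, 0 ≤ partitionMesh (N j) (t j) (hN j) := by
    intro j
    have h := hmeshle j 1 le_rfl (hN j)
    have h2 := (hpart j).2.2 0 (hN j)
    norm_num at h
    linarith
  have hmesh0' : ∀ l, 0 ≤ partitionMesh (N' l) (t' l) (hN' l) := by
    intro l
    have h := hmeshle' l 1 le_rfl (hN' l)
    have h2 := (hpart' l).2.2 0 (hN' l)
    norm_num at h
    linarith
  have hε0 : ∀ j, 0 ≤ C * partitionMesh (N j) (t j) (hN j) :=
    fun j => mul_nonneg hC0 (hmesh0 j)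
  have hε0' : ∀ l, 0 ≤ C * partitionMesh (N' l) (t' l) (hN' l) :=
    fun l => mul_nonneg hC0 (hmesh0' l)
  -- cross inclusions via common refinements
  have hcross : ∀ (n1 : ℕ) (u1 : ℕ → ℝ) (n2 : ℕ) (u2 : ℕ → ℝ),
      IsPartition t₀ tEnd n1 u1 → IsPartition t₀ tEnd n2 u2 →
      lowerSum (B ω) (G ω) tEnd n1 u1 ⊆ upperSum (B ω) (G ω) tEnd n2 u2 := by
    intro n1 u1 n2 u2 h1 h2
    obtain ⟨m, u, hu, href1, href2⟩ := exists_common_refinement h1 h2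
    exact (refine_lowerSum (B ω) (G ω) hG0ω h1 hu href1).trans
      ((lowerSum_subset_upperSum (B ω) (G ω) hG0ω hu.2.2).trans
        (refine_upperSum (B ω) (G ω) hG0ω hBmonoω h2 hu href2))
  have happrox : ∀ j, ∀ x ∈ upperSum (B ω) (G ω) tEnd (N j) (t j),
      Metric.infDist x (lowerSum (B ω) (G ω) tEnd (N j) (t j))
        ≤ C * partitionMesh (N j) (t j) (hN j) :=
    fun j => upperSum_infDist (B ω) (G ω) hG0ω hGCω hC0 (hmesh0 j) (hpart j)
      (fun i h1 h2 => hmeshle j i h1 h2)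
  have happrox' : ∀ l, ∀ x ∈ upperSum (B ω) (G ω) tEnd (N' l) (t' l),
      Metric.infDist x (lowerSum (B ω) (G ω) tEnd (N' l) (t' l))
        ≤ C * partitionMesh (N' l) (t' l) (hN' l) :=
    fun l => upperSum_infDist (B ω) (G ω) hG0ω hGCω hC0 (hmesh0' l) (hpart' l)
      (fun i h1 h2 => hmeshle' l i h1 h2)
  have hLne : ∀ j, (lowerSum (B ω) (G ω) tEnd (N j) (t j)).Nonempty :=
    fun j => lowerSum_nonempty _ _ _ _ _ (hBvals ω _).1 hG0ω
  have hLne' : ∀ l, (lowerSum (B ω) (G ω) tEnd (N' l) (t' l)).Nonempty :=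
    fun l => lowerSum_nonempty _ _ _ _ _ (hBvals ω _).1 hG0ω
  -- tendsto of the error bounds
  have hεt : Filter.Tendsto (fun j => C * partitionMesh (N j) (t j) (hN j))
      Filter.atTop (nhds 0) := by simpa using hmesh.const_mul C
  have hεt' : Filter.Tendsto (fun l => C * partitionMesh (N' l) (t' l) (hN' l))
      Filter.atTop (nhds 0) := by simpa using hmesh'.const_mul C
  have hmax : Filter.Tendsto (fun jl : ℕ × ℕ =>
      max (C * partitionMesh (N jl.1) (t jl.1) (hN jl.1))
        (C * partitionMesh (N' jl.2) (t' jl.2) (hN' jl.2))) Filter.atTop (nhds 0) := by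
    rw [← Filter.prod_atTop_atTop_eq]
    have h1 := hεt.comp (Filter.tendsto_fst
      (f := (Filter.atTop : Filter ℕ)) (g := (Filter.atTop : Filter ℕ)))
    have h2 := hεt'.comp (Filter.tendsto_snd
      (f := (Filter.atTop : Filter ℕ)) (g := (Filter.atTop : Filter ℕ)))
    simpa using h1.max h2
  have hdL : ∀ j l, Metric.hausdorffDist (lowerSum (B ω) (G ω) tEnd (N j) (t j))
      (lowerSum (B ω) (G ω) tEnd (N' l) (t' l))
      ≤ max (C * partitionMesh (N j) (t j) (hN j))
        (C * partitionMesh (N' l) (t' l) (hN' l)) := by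
    intro j l
    apply Metric.hausdorffDist_le_of_infDist (le_max_of_le_left (hε0 j))
    · intro x hx
      exact le_trans (happrox' l x (hcross _ _ _ _ (hpart j) (hpart' l) hx))
        (le_max_right _ _)
    · intro x hx
      exact le_trans (happrox j x (hcross _ _ _ _ (hpart' l) (hpart j) hx))
        (le_max_left _ _)
  have hdU : ∀ j l, Metric.hausdorffDist (upperSum (B ω) (G ω) tEnd (N j) (t j))
      (upperSum (B ω) (G ω) tEnd (N' l) (t' l))
      ≤ max (C * partitionMesh (N j) (t j) (hN j))
        (C * partitionMesh (N' l) (t' l) (hN' l)) := by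
    intro j l
    apply Metric.hausdorffDist_le_of_infDist (le_max_of_le_left (hε0 j))
    · intro x hx
      have h1 := happrox j x hx
      have h2 := Metric.infDist_le_infDist_of_subset
        (hcross _ _ _ _ (hpart j) (hpart' l)) (hLne j) (x := x)
      exact le_trans (le_trans h2 h1) (le_max_left _ _)
    · intro x hx
      have h1 := happrox' l x hx
      have h2 := Metric.infDist_le_infDist_of_subset
        (hcross _ _ _ _ (hpart' l) (hpart j)) (hLne' l) (x := x)
      exact le_trans (le_trans h2 h1) (le_max_right _ _)
  refine ⟨?_, ?_, ?_, ?_⟩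
  · exact squeeze_zero (fun _ => Metric.hausdorffDist_nonneg)
      (fun jl => hdL jl.1 jl.2) hmax
  · exact squeeze_zero (fun _ => Metric.hausdorffDist_nonneg)
      (fun jl => hdU jl.1 jl.2) hmax
  · apply Set.Subset.antisymm
    · apply closure_minimal
      · exact Set.iUnion_subset fun j => Set.subset_iInter fun k =>
          hcross _ _ _ _ (hpart j) (hpart k)
      · exact isClosed_iInter fun k => upperSum_isClosed _ _ _ _ _
    · intro x hx
      rw [Metric.mem_closure_iff]
      intro r hr'
      obtain ⟨j, hj⟩ := (hεt.eventually (gt_mem_nhds hr')).exists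
      have hxU : x ∈ upperSum (B ω) (G ω) tEnd (N j) (t j) := Set.mem_iInter.mp hx j
      have hlt : Metric.infDist x (lowerSum (B ω) (G ω) tEnd (N j) (t j)) < r :=
        lt_of_le_of_lt (happrox j x hxU) hj
      obtain ⟨y, hy, hyd⟩ := (Metric.infDist_lt_iff (hLne j)).mp hlt
      exact ⟨y, Set.mem_iUnion.mpr ⟨j, hy⟩, hyd⟩
  · apply Set.Subset.antisymm
    · refine closure_minimal (Set.iUnion_subset fun j x hx => ?_) isClosed_closure
      rw [Metric.mem_closure_iff]
      intro r hr'
      obtain ⟨l, hl⟩ := (hεt'.eventually (gt_mem_nhds hr')).exists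
      have hxU : x ∈ upperSum (B ω) (G ω) tEnd (N' l) (t' l) :=
        hcross _ _ _ _ (hpart j) (hpart' l) hx
      obtain ⟨y, hy, hyd⟩ := (Metric.infDist_lt_iff (hLne' l)).mp
        (lt_of_le_of_lt (happrox' l x hxU) hl)
      exact ⟨y, Set.mem_iUnion.mpr ⟨l, hy⟩, hyd⟩
    · refine closure_minimal (Set.iUnion_subset fun l x hx => ?_) isClosed_closure
      rw [Metric.mem_closure_iff]
      intro r hr'
      obtain ⟨j, hj⟩ := (hεt.eventually (gt_mem_nhds hr')).exists
      have hxU : x ∈ upperSum (B ω) (G ω) tEnd (N j) (t j) :=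
        hcross _ _ _ _ (hpart' l) (hpart j) hx
      obtain ⟨y, hy, hyd⟩ := (Metric.infDist_lt_iff (hLne j)).mp
        (lt_of_le_of_lt (happrox j x hxU) hj)
      exact ⟨y, Set.mem_iUnion.mpr ⟨j, hy⟩, hyd⟩
end
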